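/- arXiv:1612.01177 — 4 statements merged into one kernel-verified Lean document; each statement's English description precedes it below -/
import Mathlib

section
/- Let $b > 0$, $\mathbb{S} = \{\zeta \in \mathbb{C} : |\mathrm{Im}\,\zeta| < b\}$, and let $w: \mathbb{S} \to \mathbb{C}$ be bounded analytic with a nonzero limit $c$ as $\mathrm{Re}\,\zeta \to +\infty$ along the real axis (i.e. $w(\theta) \to c \neq 0$ as $\theta \to +\infty$, $\theta \in \mathbb{R}$). Then the weighted restriction operator $R_{w,0}: H^2(\mathbb{S}) \to L^2(\mathbb{R})$, $R_{w,0}f = (w f)|_{\mathbb{R}}$, is not a compact operator. -/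
open Complex MeasureTheory Set

private lemma wrnc_nnnorm_inv_sq (u v : ℝ) :
    (‖(((u:ℂ) + (v:ℂ) * Complex.I))⁻¹‖₊ : ENNReal) ^ 2 = ENNReal.ofReal ((u^2 + v^2)⁻¹) := by
  rw [← enorm_eq_nnnorm, ← ofReal_norm, ← ENNReal.ofReal_pow (norm_nonneg _)]
  congr 1
  rw [norm_inv, inv_pow]
  congr 1
  rw [Complex.norm_add_mul_I, Real.sq_sqrt (by positivity)]

private lemma wrnc_integral_base :
    Integrable (fun x : ℝ => (x^2 + Real.pi^2)⁻¹) ∧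
      (∫ x : ℝ, (x^2 + Real.pi^2)⁻¹) = 1 := by
  have hπ : (0:ℝ) < Real.pi := Real.pi_pos
  have heq : (fun x : ℝ => (x^2 + Real.pi^2)⁻¹)
      = fun x : ℝ => Real.pi⁻¹ * Real.pi⁻¹ * (1 + (x / Real.pi)^2)⁻¹ := by
    funext x
    rw [div_pow]
    field_simp
    ring
  have hint : Integrable (fun x : ℝ => (1 + (x / Real.pi)^2)⁻¹) :=
    integrable_inv_one_add_sq.comp_div hπ.ne'
  have hval : (∫ x : ℝ, (1 + (x / Real.pi)^2)⁻¹) = Real.pi * Real.pi := by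
    rw [Measure.integral_comp_div (fun y : ℝ => (1 + y^2)⁻¹) Real.pi,
      integral_univ_inv_one_add_sq, abs_of_pos hπ, smul_eq_mul]
  constructor
  · rw [heq]; exact (hint.const_mul _)
  · rw [heq, integral_const_mul, hval]
    field_simp

private lemma wrnc_lintegral_line {p : ℝ} (hp : Real.pi ≤ p) (s : ℝ) :
    ∫⁻ x : ℝ, ENNReal.ofReal (((x - s)^2 + p^2)⁻¹) ≤ 1 := by
  have hπ : (0:ℝ) < Real.pi := Real.pi_pos
  have htrans : ∫⁻ x : ℝ, ENNReal.ofReal (((x - s)^2 + p^2)⁻¹)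
      = ∫⁻ x : ℝ, ENNReal.ofReal ((x^2 + p^2)⁻¹) :=
    lintegral_sub_right_eq_self (fun x : ℝ => ENNReal.ofReal ((x^2 + p^2)⁻¹)) s
  rw [htrans]
  have hmono : ∫⁻ x : ℝ, ENNReal.ofReal ((x^2 + p^2)⁻¹)
      ≤ ∫⁻ x : ℝ, ENNReal.ofReal ((x^2 + Real.pi^2)⁻¹) := by
    refine lintegral_mono fun x => ENNReal.ofReal_le_ofReal ?_
    have h1 : (0:ℝ) < x^2 + Real.pi^2 := by positivity
    refine inv_anti₀ h1 ?_
    have : Real.pi^2 ≤ p^2 := by nlinarith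
    linarith
  refine hmono.trans ?_
  obtain ⟨hint, hval⟩ := wrnc_integral_base
  rw [← ofReal_integral_eq_lintegral_ofReal hint
      (Filter.Eventually.of_forall fun x => by positivity), hval]
  simp

/-- Non-compactness of the weighted restriction operator `R_{w,0} : H²(𝕊) → L²(ℝ)`,
`f ↦ (w f)|ℝ`, when the bounded analytic weight `w` on the strip
`𝕊 = {|Im ζ| < b}` has a nonzero limit `c` at `+∞` along `ℝ`: the image of the unit
ball of `H²(𝕊)` is not totally bounded in `L²(ℝ)`. -/
theorem weighted_restriction_not_compact
    {b : ℝ} (hb : 0 < b) (w : ℂ → ℂ) (c : ℂ) (hc : c ≠ 0)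
    (hw : DifferentiableOn ℂ w {ζ : ℂ | |ζ.im| < b})
    (hwb : ∃ M : ℝ, ∀ ζ : ℂ, |ζ.im| < b → ‖w ζ‖ ≤ M)
    (hlim : Filter.Tendsto (fun θ : ℝ => w (θ : ℂ)) Filter.atTop (nhds c)) :
    ¬ TotallyBounded {g : Lp ℂ 2 (volume : Measure ℝ) |
        ∃ f : ℂ → ℂ, DifferentiableOn ℂ f {ζ : ℂ | |ζ.im| < b} ∧
          (∀ y : ℝ, |y| < b →
            ∫⁻ x : ℝ, (‖f ((x : ℂ) + (y : ℂ) * Complex.I)‖₊ : ENNReal) ^ 2 ≤ 1) ∧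
          ∀ᵐ x : ℝ, (g : ℝ → ℂ) x = w (x : ℂ) * f (x : ℂ)} := by
  obtain ⟨M0, hM0⟩ := hwb
  set M : ℝ := max M0 1 with hMdef
  have hM1 : (1:ℝ) ≤ M := le_max_right _ _
  have hMpos : (0:ℝ) < M := lt_of_lt_of_le one_pos hM1
  have hxmem : ∀ x : ℝ, |((x:ℂ)).im| < b := fun x => by simpa using hb
  have hM : ∀ x : ℝ, ‖w x‖ ≤ M := fun x =>
    le_trans (hM0 _ (hxmem x)) (le_max_left _ _)
  have hπ : (0:ℝ) < Real.pi := Real.pi_pos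
  set K : ℝ := b + Real.pi with hKdef
  have hKpos : 0 < K := by positivity
  have hopen : IsOpen {ζ : ℂ | |ζ.im| < b} :=
    isOpen_lt (Complex.continuous_im.abs) continuous_const
  have hwc : Continuous fun x : ℝ => w x := by
    rw [continuous_iff_continuousAt]
    intro x
    exact ((hw.differentiableAt (hopen.mem_nhds (hxmem x))).continuousAt).comp
      Complex.continuous_ofReal.continuousAt
  set F : ℝ → ℂ → ℂ := fun a ζ => (ζ - a + (K:ℂ) * Complex.I)⁻¹ with hFdef
  have hFne : ∀ (a : ℝ) (ζ : ℂ), |ζ.im| < b → ζ - a + (K:ℂ) * Complex.I ≠ 0 := by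
    intro a ζ hζ h0
    have him : (ζ - (a:ℂ) + (K:ℂ) * Complex.I).im = ζ.im + K := by simp
    rw [h0] at him
    simp only [Complex.zero_im] at him
    have h1 : -ζ.im ≤ |ζ.im| := neg_le_abs _
    rw [hKdef] at him
    linarith
  have hFdiff : ∀ a : ℝ, DifferentiableOn ℂ (F a) {ζ : ℂ | |ζ.im| < b} := by
    intro a
    refine DifferentiableOn.inv ?_ ?_
    · exact ((differentiable_id.sub_const (a:ℂ)).add_const _).differentiableOn
    · intro ζ hζ
      exact hFne a ζ hζ
  have hFval : ∀ (a x y : ℝ), F a ((x:ℂ) + (y:ℂ) * Complex.I)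
      = (((x - a : ℝ):ℂ) + ((y + K : ℝ):ℂ) * Complex.I)⁻¹ := by
    intro a x y
    simp only [hFdef]
    push_cast
    ring_nf
  have hFline : ∀ (a : ℝ) (y : ℝ), |y| < b →
      ∫⁻ x : ℝ, (‖F a ((x:ℂ) + (y:ℂ) * Complex.I)‖₊ : ENNReal) ^ 2 ≤ 1 := by
    intro a y hy
    have hp : Real.pi ≤ y + K := by
      have h1 : -y ≤ |y| := neg_le_abs _
      rw [hKdef]
      linarith
    calc ∫⁻ x : ℝ, (‖F a ((x:ℂ) + (y:ℂ) * Complex.I)‖₊ : ENNReal) ^ 2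
        = ∫⁻ x : ℝ, ENNReal.ofReal (((x - a)^2 + (y + K)^2)⁻¹) := by
          refine lintegral_congr fun x => ?_
          rw [hFval a x y, wrnc_nnnorm_inv_sq]
      _ ≤ 1 := wrnc_lintegral_line hp a
  have hFreal : ∀ a : ℝ, ∫⁻ x : ℝ, (‖F a (x:ℂ)‖₊ : ENNReal) ^ 2 ≤ 1 := by
    intro a
    have h := hFline a 0 (by simpa using hb)
    simpa using h
  have hFnorm : ∀ (a x : ℝ), ‖F a (x:ℂ)‖ = (Real.sqrt ((x - a)^2 + K^2))⁻¹ := by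
    intro a x
    have h1 : F a (x:ℂ) = (((x - a : ℝ):ℂ) + ((0 + K : ℝ):ℂ) * Complex.I)⁻¹ := by
      have := hFval a x 0
      simpa using this
    rw [h1, norm_inv, Complex.norm_add_mul_I, zero_add]
  set G : ℝ → ℝ → ℂ := fun a x => w x * F a (x:ℂ) with hGdef
  have hGcont : ∀ a, Continuous (G a) := by
    intro a
    refine hwc.mul ?_
    refine Continuous.inv₀ ?_ ?_
    · exact (Complex.continuous_ofReal.sub continuous_const).add continuous_const
    · intro x
      exact hFne a x (hxmem x)
  have hGlint : ∀ a, ∫⁻ x : ℝ, (‖G a x‖₊ : ENNReal) ^ 2 ≤ ENNReal.ofReal (M^2) := by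
    intro a
    have h1 : ∀ x : ℝ, (‖G a x‖₊ : ENNReal) ^ 2
        ≤ ENNReal.ofReal (M^2) * (‖F a (x:ℂ)‖₊ : ENNReal) ^ 2 := by
      intro x
      rw [← enorm_eq_nnnorm, ← enorm_eq_nnnorm, ← ofReal_norm, ← ofReal_norm,
        ← ENNReal.ofReal_pow (norm_nonneg _), ← ENNReal.ofReal_pow (norm_nonneg _),
        ← ENNReal.ofReal_mul (by positivity)]
      refine ENNReal.ofReal_le_ofReal ?_
      have h2 : ‖G a x‖ ≤ M * ‖F a (x:ℂ)‖ := by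
        calc ‖G a x‖ = ‖w x‖ * ‖F a (x:ℂ)‖ := norm_mul _ _
          _ ≤ M * ‖F a (x:ℂ)‖ :=
            mul_le_mul_of_nonneg_right (hM x) (norm_nonneg _)
      calc ‖G a x‖^2 ≤ (M * ‖F a (x:ℂ)‖)^2 :=
            pow_le_pow_left₀ (norm_nonneg _) h2 2
        _ = M^2 * ‖F a (x:ℂ)‖^2 := by ring
    calc ∫⁻ x : ℝ, (‖G a x‖₊ : ENNReal) ^ 2
        ≤ ∫⁻ x : ℝ, ENNReal.ofReal (M^2) * (‖F a (x:ℂ)‖₊ : ENNReal) ^ 2 :=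
          lintegral_mono h1
      _ = ENNReal.ofReal (M^2) * ∫⁻ x : ℝ, (‖F a (x:ℂ)‖₊ : ENNReal) ^ 2 :=
          lintegral_const_mul' _ _ ENNReal.ofReal_ne_top
      _ ≤ ENNReal.ofReal (M^2) * 1 := by
          exact mul_le_mul_of_nonneg_left (hFreal a) (by positivity)
      _ = ENNReal.ofReal (M^2) := mul_one _
  have hsnorm : ∀ f : ℝ → ℂ, eLpNorm f 2 volume
      = (∫⁻ x : ℝ, (‖f x‖₊ : ENNReal) ^ 2) ^ (1/2 : ℝ) := by
    intro f
    rw [eLpNorm_eq_lintegral_rpow_enorm_toReal two_ne_zero (by norm_num)]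
    simp only [ENNReal.toReal_ofNat]
    congr 1
    refine lintegral_congr fun x => ?_
    rw [← ENNReal.rpow_natCast]
    norm_num
    rfl
  have hGmem : ∀ a, MemLp (G a) 2 volume := by
    intro a
    constructor
    · exact (hGcont a).aestronglyMeasurable
    · rw [hsnorm (G a)]
      refine lt_of_le_of_lt (ENNReal.rpow_le_rpow (hGlint a) (by norm_num)) ?_
      exact ENNReal.rpow_lt_top_of_nonneg (by norm_num) ENNReal.ofReal_ne_top
  have hcpos : 0 < ‖c‖ := norm_pos_iff.mpr hc
  have hev : ∀ᶠ θ : ℝ in Filter.atTop, ‖c‖/2 ≤ ‖w θ‖ := by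
    filter_upwards [hlim.eventually_mem (Metric.ball_mem_nhds c (half_pos hcpos))] with θ hθ
    have h1 : ‖w θ - c‖ < ‖c‖/2 := by
      simpa [dist_eq_norm] using hθ
    have h2 : ‖c‖ - ‖w θ‖ ≤ ‖w θ - c‖ := by
      rw [norm_sub_rev]
      exact norm_sub_norm_le c (w θ)
    linarith
  obtain ⟨X0, hX0⟩ := Filter.eventually_atTop.mp hev
  set S1 : ℝ := Real.sqrt (1 + K^2) with hS1def
  have hS1pos : 0 < S1 := Real.sqrt_pos.mpr (by positivity)
  set T : ℝ := 2 + 2 * S1 with hTdef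
  set A : ℕ → ℝ := fun n => X0 + 1 + n * T with hAdef
  set d : ℝ := ‖c‖/2 * (S1⁻¹/2) with hddef
  have hdpos : 0 < d := by positivity
  set g : ℕ → Lp ℂ 2 (volume : Measure ℝ) := fun n => (hGmem (A n)).toLp (G (A n)) with hgdef
  -- pointwise lower bound on the interval around A n
  have hpoint : ∀ n m : ℕ, n ≠ m → ∀ x ∈ Icc (A n - 1) (A n + 1),
      ENNReal.ofReal (d^2) ≤ (‖G (A n) x - G (A m) x‖₊ : ENNReal) ^ 2 := by
    intro n m hne x hx
    obtain ⟨hx1, hx2⟩ := hx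
    have hTn : (0:ℝ) ≤ (n:ℝ) * T := by positivity
    have hwx : ‖c‖/2 ≤ ‖w x‖ := by
      refine hX0 x ?_
      simp only [hAdef] at hx1
      linarith
    have hxan : (x - A n)^2 ≤ 1 := by nlinarith
    have hn : S1⁻¹ ≤ ‖F (A n) x‖ := by
      rw [hFnorm]
      refine inv_anti₀ (Real.sqrt_pos.mpr (by positivity)) ?_
      exact Real.sqrt_le_sqrt (by linarith)
    have hnm1 : (1:ℝ) ≤ |(n:ℝ) - (m:ℝ)| := by
      have h0 : ((n:ℤ) - (m:ℤ)) ≠ 0 := sub_ne_zero.mpr (by exact_mod_cast hne)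
      have h1 := Int.one_le_abs h0
      exact_mod_cast h1
    have hanm : T ≤ |A n - A m| := by
      have h2 : A n - A m = ((n:ℝ) - (m:ℝ)) * T := by
        simp only [hAdef]
        ring
      rw [h2, abs_mul, abs_of_pos (show (0:ℝ) < T by positivity)]
      nlinarith
    have hxm : 2 * S1 ≤ |x - A m| := by
      have h3 : |x - A n| ≤ 1 := by
        rw [abs_le]
        constructor <;> linarith
      have h4 : |A n - A m| ≤ |A n - x| + |x - A m| := abs_sub_le _ _ _
      rw [abs_sub_comm (A n) x] at h4
      have : T = 2 + 2 * S1 := hTdef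
      linarith
    have hm : ‖F (A m) x‖ ≤ S1⁻¹/2 := by
      rw [hFnorm]
      have h5 : 2 * S1 ≤ Real.sqrt ((x - A m)^2 + K^2) := by
        calc 2 * S1 ≤ |x - A m| := hxm
          _ = Real.sqrt ((x - A m)^2) := (Real.sqrt_sq_eq_abs _).symm
          _ ≤ Real.sqrt ((x - A m)^2 + K^2) := Real.sqrt_le_sqrt (by nlinarith)
      have h6 := inv_anti₀ (by positivity : (0:ℝ) < 2 * S1) h5
      calc (Real.sqrt ((x - A m)^2 + K^2))⁻¹ ≤ (2 * S1)⁻¹ := h6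
        _ = S1⁻¹/2 := by
          rw [mul_inv]
          ring
    have hsub : S1⁻¹/2 ≤ ‖F (A n) x - F (A m) x‖ := by
      have h7 := norm_sub_norm_le (F (A n) (x:ℂ)) (F (A m) (x:ℂ))
      linarith
    have hdle : d ≤ ‖G (A n) x - G (A m) x‖ := by
      have h8 : G (A n) x - G (A m) x = w x * (F (A n) (x:ℂ) - F (A m) (x:ℂ)) := by
        simp only [hGdef]
        ring
      rw [h8, norm_mul]
      calc d = ‖c‖/2 * (S1⁻¹/2) := hddef
        _ ≤ ‖w x‖ * ‖F (A n) (x:ℂ) - F (A m) (x:ℂ)‖ :=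
          mul_le_mul hwx hsub (by positivity) (norm_nonneg _)
    rw [← enorm_eq_nnnorm, ← ofReal_norm, ← ENNReal.ofReal_pow (norm_nonneg _)]
    refine ENNReal.ofReal_le_ofReal ?_
    exact pow_le_pow_left₀ hdpos.le hdle 2
  have hsep : ∀ n m : ℕ, n ≠ m → d ≤ dist (g n) (g m) := by
    intro n m hne
    have hae : (↑(g n - g m) : ℝ → ℂ)
        =ᵐ[volume] fun x => G (A n) x - G (A m) x := by
      filter_upwards [Lp.coeFn_sub (g n) (g m), (hGmem (A n)).coeFn_toLp,
        (hGmem (A m)).coeFn_toLp] with x h1 h2 h3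
      rw [h1, Pi.sub_apply, h2, h3]
    rw [dist_eq_norm, Lp.norm_def, eLpNorm_congr_ae hae, hsnorm]
    have hmble : Measurable fun x => (‖G (A n) x - G (A m) x‖₊ : ENNReal) ^ 2 :=
      ((((hGcont (A n)).sub (hGcont (A m))).measurable.nnnorm).coe_nnreal_ennreal).pow_const 2
    have hlow : ENNReal.ofReal (d^2)
        ≤ ∫⁻ x : ℝ, (‖G (A n) x - G (A m) x‖₊ : ENNReal) ^ 2 := by
      calc ENNReal.ofReal (d^2)
          ≤ ENNReal.ofReal (d^2) * volume (Icc (A n - 1) (A n + 1)) := by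
            rw [Real.volume_Icc]
            refine le_mul_of_one_le_right (by positivity) ?_
            rw [show A n + 1 - (A n - 1) = 2 by ring]
            rw [show (1:ENNReal) = ENNReal.ofReal 1 by simp]
            exact ENNReal.ofReal_le_ofReal (by norm_num)
        _ = ∫⁻ _ in Icc (A n - 1) (A n + 1), ENNReal.ofReal (d^2) := by
            rw [setLIntegral_const]
        _ ≤ ∫⁻ x in Icc (A n - 1) (A n + 1), (‖G (A n) x - G (A m) x‖₊ : ENNReal) ^ 2 :=
            setLIntegral_mono hmble (hpoint n m hne)
        _ ≤ ∫⁻ x : ℝ, (‖G (A n) x - G (A m) x‖₊ : ENNReal) ^ 2 :=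
            setLIntegral_le_lintegral _ _
    have hfin : (∫⁻ x : ℝ, (‖G (A n) x - G (A m) x‖₊ : ENNReal) ^ 2) ^ (1/2:ℝ) ≠ ⊤ := by
      have h9 := ((hGmem (A n)).sub (hGmem (A m))).2
      have h10 : eLpNorm (fun x => G (A n) x - G (A m) x) 2 volume < ⊤ := h9
      rw [hsnorm] at h10
      exact h10.ne
    have hle : ENNReal.ofReal d
        ≤ (∫⁻ x : ℝ, (‖G (A n) x - G (A m) x‖₊ : ENNReal) ^ 2) ^ (1/2:ℝ) := by
      have h1 : ENNReal.ofReal d = (ENNReal.ofReal (d^2)) ^ (1/2:ℝ) := by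
        rw [ENNReal.ofReal_rpow_of_pos (by positivity)]
        congr 1
        rw [← Real.rpow_natCast d 2, ← Real.rpow_mul hdpos.le]
        norm_num
      rw [h1]
      exact ENNReal.rpow_le_rpow hlow (by norm_num)
    calc d = (ENNReal.ofReal d).toReal := (ENNReal.toReal_ofReal hdpos.le).symm
      _ ≤ _ := ENNReal.toReal_mono hfin hle
  have hgmem : ∀ n : ℕ, g n ∈ {g : Lp ℂ 2 (volume : Measure ℝ) |
      ∃ f : ℂ → ℂ, DifferentiableOn ℂ f {ζ : ℂ | |ζ.im| < b} ∧
        (∀ y : ℝ, |y| < b →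
          ∫⁻ x : ℝ, (‖f ((x : ℂ) + (y : ℂ) * Complex.I)‖₊ : ENNReal) ^ 2 ≤ 1) ∧
        ∀ᵐ x : ℝ, (g : ℝ → ℂ) x = w (x : ℂ) * f (x : ℂ)} := by
    intro n
    refine ⟨F (A n), hFdiff _, hFline _, ?_⟩
    filter_upwards [(hGmem (A n)).coeFn_toLp] with x hx
    exact hx
  intro hTB
  obtain ⟨t, htfin, hcov⟩ := (Metric.totallyBounded_iff.mp hTB) (d/2) (by positivity)
  have hchoice : ∀ n : ℕ, ∃ y ∈ t, g n ∈ Metric.ball y (d/2) := by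
    intro n
    have := hcov (hgmem n)
    simpa using this
  choose y hyt hball using hchoice
  haveI : Finite t := htfin
  obtain ⟨n, m, hne, heq⟩ :=
    Finite.exists_ne_map_eq_of_infinite (fun n : ℕ => (⟨y n, hyt n⟩ : t))
  have hynm : y n = y m := congrArg Subtype.val heq
  have h1 : dist (g n) (g m) < d := by
    have h2 : dist (g n) (y n) < d/2 := Metric.mem_ball.mp (hball n)
    have h3 : dist (g m) (y m) < d/2 := Metric.mem_ball.mp (hball m)
    calc dist (g n) (g m) ≤ dist (g n) (y m) + dist (y m) (g m) := dist_triangle _ _ _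
      _ < d := by
        rw [hynm] at h2
        rw [dist_comm (y m) (g m)]
        linarith
  exact absurd (hsep n m hne) (not_le.mpr h1)
end

section
/- Let $0 < \lambda < 1$, $\varphi_\lambda$ the lens map, and $\gamma(t) = \varphi_\lambda(e^{it})$ (boundary values). Then there exist constants $0 < c < C$ (depending only on $\lambda$) such that for $0 < t \leq \pi/2$: $c\, t^\lambda \leq 1 - |\gamma(t)| \leq |1 - \gamma(t)| \leq C\, t^\lambda$. -/
open Complex Real

/-- The lens map of parameter `0 < λ < 1` (principal powers). -/
noncomputable def lensMap (lam : ℝ) (z : ℂ) : ℂ :=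
    ((1 + z) ^ (lam : ℂ) - (1 - z) ^ (lam : ℂ)) / ((1 + z) ^ (lam : ℂ) + (1 - z) ^ (lam : ℂ))

set_option maxHeartbeats 1000000

lemma lens_sq_le (M N : ℝ) (hM : 0 ≤ M) (hN : 0 ≤ N) (h : M^2 ≤ N^2) : M ≤ N := by nlinarith


lemma lens_exp_eq_one_add (t : ℝ) (h : 0 < t) (h2 : t ≤ π/2) :
    Complex.exp ((Real.log (2*Real.cos (t/2)) : ℂ) + (t/2 : ℝ) * I) = 1 + Complex.exp (t*I) := by
  have hc : 0 < Real.cos (t/2) := Real.cos_pos_of_mem_Ioo ⟨by linarith [Real.pi_pos], by linarith [Real.pi_pos]⟩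
  have hcos : Real.cos t = 2 * Real.cos (t/2)^2 - 1 := by
    have := Real.cos_two_mul (t/2); rw [show 2*(t/2) = t by ring] at this; linarith
  have hsin : Real.sin t = 2 * Real.sin (t/2) * Real.cos (t/2) := by
    have := Real.sin_two_mul (t/2); rw [show 2*(t/2) = t by ring] at this; linarith
  apply Complex.ext
  · simp only [Complex.exp_re, Complex.add_re, Complex.ofReal_re, Complex.mul_re,
      Complex.I_re, Complex.I_im, Complex.ofReal_im, Complex.add_im, Complex.mul_im,
      Complex.one_re, Complex.exp_ofReal_mul_I_re]
    rw [show (Real.log (2*Real.cos (t/2)) + (t/2 * 0 - 0 * 1)) = Real.log (2*Real.cos (t/2)) by ring,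
      show (0 + (t/2 * 1 + 0 * 0)) = t/2 by ring, Real.exp_log (by positivity)]
    rw [show t*0-0*1 = 0 by ring, show t*1+0*0 = t by ring, Real.exp_zero]
    nlinarith [Real.sin_sq_add_cos_sq (t/2)]
  · simp only [Complex.exp_im, Complex.add_im, Complex.ofReal_re, Complex.mul_re,
      Complex.I_re, Complex.I_im, Complex.ofReal_im, Complex.add_re, Complex.mul_im,
      Complex.one_im, Complex.exp_ofReal_mul_I_im]
    rw [show (Real.log (2*Real.cos (t/2)) + (t/2 * 0 - 0 * 1)) = Real.log (2*Real.cos (t/2)) by ring,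
      show (0 + (t/2 * 1 + 0 * 0)) = t/2 by ring, Real.exp_log (by positivity)]
    rw [show t*0-0*1 = 0 by ring, show t*1+0*0 = t by ring, Real.exp_zero]
    nlinarith

lemma lens_exp_eq_one_sub (t : ℝ) (h : 0 < t) (h2 : t ≤ π/2) :
    Complex.exp ((Real.log (2*Real.sin (t/2)) : ℂ) + ((t/2 - π/2 : ℝ) : ℂ) * I) = 1 - Complex.exp (t*I) := by
  have hc : 0 < Real.sin (t/2) := Real.sin_pos_of_pos_of_lt_pi (by linarith) (by linarith [Real.pi_gt_three])
  have hcos : Real.cos t = 1 - 2 * Real.sin (t/2)^2 := by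
    have := Real.cos_two_mul (t/2); rw [show 2*(t/2) = t by ring] at this
    nlinarith [Real.sin_sq_add_cos_sq (t/2)]
  have hsin : Real.sin t = 2 * Real.sin (t/2) * Real.cos (t/2) := by
    have := Real.sin_two_mul (t/2); rw [show 2*(t/2) = t by ring] at this; linarith
  have h1 : Real.cos (t/2 - π/2) = Real.sin (t/2) := Real.cos_sub_pi_div_two _
  have h2' : Real.sin (t/2 - π/2) = -Real.cos (t/2) := Real.sin_sub_pi_div_two _
  apply Complex.ext
  · simp only [Complex.exp_re, Complex.add_re, Complex.ofReal_re, Complex.mul_re,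
      Complex.I_re, Complex.I_im, Complex.ofReal_im, Complex.add_im, Complex.mul_im,
      Complex.one_re, Complex.sub_re, Complex.sub_im, Complex.exp_ofReal_mul_I_re]
    rw [show (Real.log (2*Real.sin (t/2)) + ((t/2-π/2) * 0 - 0 * 1)) = Real.log (2*Real.sin (t/2)) by ring,
      show (0 + ((t/2-π/2) * 1 + 0 * 0)) = t/2 - π/2 by ring, Real.exp_log (by positivity), h1]
    rw [show t*0-0*1 = 0 by ring, show t*1+0*0 = t by ring, Real.exp_zero]
    nlinarith
  · simp only [Complex.exp_im, Complex.add_im, Complex.ofReal_re, Complex.mul_re,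
      Complex.I_re, Complex.I_im, Complex.ofReal_im, Complex.add_re, Complex.mul_im,
      Complex.one_im, Complex.sub_im, Complex.sub_re, Complex.exp_ofReal_mul_I_im]
    rw [show (Real.log (2*Real.sin (t/2)) + ((t/2-π/2) * 0 - 0 * 1)) = Real.log (2*Real.sin (t/2)) by ring,
      show (0 + ((t/2-π/2) * 1 + 0 * 0)) = t/2 - π/2 by ring, Real.exp_log (by positivity), h2']
    rw [show t*0-0*1 = 0 by ring, show t*1+0*0 = t by ring, Real.exp_zero]
    nlinarith

lemma lens_key {lam : ℝ} (hlam0 : 0 < lam) (hlam1 : lam < 1) (t : ℝ) (ht : 0 < t) (ht2 : t ≤ π / 2) :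
    Real.cos (lam * (π/2)) * (2/π)^lam / 8 * t ^ lam ≤ 1 - ‖lensMap lam (Complex.exp (t * Complex.I))‖ ∧
    1 - ‖lensMap lam (Complex.exp (t * Complex.I))‖ ≤ ‖1 - lensMap lam (Complex.exp (t * Complex.I))‖ ∧
    ‖1 - lensMap lam (Complex.exp (t * Complex.I))‖ ≤ 4 * t ^ lam := by
  have hpi : (3:ℝ) < π := Real.pi_gt_three
  have hpi4 : π ≤ 4 := by linarith [Real.pi_le_four]
  set s := t/2 with hs_def
  have hs0 : 0 < s := by positivity
  have hs4 : s ≤ π/4 := by rw [hs_def]; linarith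
  set c0 := Real.cos s with hc0_def
  set s0 := Real.sin s with hs0_def
  have hc0 : 0 < c0 := Real.cos_pos_of_mem_Ioo ⟨by linarith, by linarith⟩
  have hs0' : 0 < s0 := Real.sin_pos_of_pos_of_lt_pi hs0 (by linarith)
  have hc0half : 1/2 ≤ c0 := by
    have h3 : Real.cos (π/3) ≤ Real.cos s :=
      Real.cos_le_cos_of_nonneg_of_le_pi (le_of_lt hs0) (by linarith) (by linarith)
    rw [Real.cos_pi_div_three] at h3; exact h3
  have hc01 : c0 ≤ 1 := Real.cos_le_one s
  have hs01 : s0 ≤ 1 := Real.sin_le_one s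
  set a : ℂ := (Real.log (2*c0) : ℂ) + (s : ℝ) * I with ha_def
  set b : ℂ := (Real.log (2*s0) : ℂ) + ((s - π/2 : ℝ) : ℂ) * I with hb_def
  have ha_im : a.im = s := by simp [ha_def]
  have ha_re : a.re = Real.log (2*c0) := by simp [ha_def]
  have hb_im : b.im = s - π/2 := by simp [hb_def]
  have hb_re : b.re = Real.log (2*s0) := by simp [hb_def]
  set u : ℂ := Complex.exp (t * I) with hu_def
  have ha : Complex.exp a = 1 + u := lens_exp_eq_one_add t ht ht2
  have hb : Complex.exp b = 1 - u := lens_exp_eq_one_sub t ht ht2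
  set A : ℂ := Complex.exp ((lam : ℂ) * a) with hA_def
  set B : ℂ := Complex.exp ((lam : ℂ) * b) with hB_def
  have hcpow : ∀ w : ℂ, -π < w.im → w.im ≤ π → (Complex.exp w) ^ (lam : ℂ) = Complex.exp ((lam:ℂ) * w) := by
    intro w h1 h2
    rw [Complex.cpow_def_of_ne_zero (Complex.exp_ne_zero _), Complex.log_exp h1 h2, mul_comm]
  have hA : (1 + u) ^ (lam : ℂ) = A := by
    rw [← ha, hcpow a (by rw [ha_im]; linarith) (by rw [ha_im]; linarith)]
  have hB : (1 - u) ^ (lam : ℂ) = B := by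
    rw [← hb, hcpow b (by rw [hb_im]; linarith) (by rw [hb_im]; linarith)]
  -- moduli
  set α : ℝ := (2*c0)^lam with hα_def
  set β : ℝ := (2*s0)^lam with hβ_def
  have hla_re : ((lam:ℂ) * a).re = lam * Real.log (2*c0) := by
    simp [Complex.mul_re, ha_re, ha_def]
  have hla_im : ((lam:ℂ) * a).im = lam * s := by
    simp [Complex.mul_im, ha_im, ha_def]
  have hlb_re : ((lam:ℂ) * b).re = lam * Real.log (2*s0) := by
    simp [Complex.mul_re, hb_re, hb_def]
  have hlb_im : ((lam:ℂ) * b).im = lam * (s - π/2) := by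
    simp [Complex.mul_im, hb_im, hb_def]
  have hαexp : α = Real.exp (lam * Real.log (2*c0)) := by
    rw [hα_def, Real.rpow_def_of_pos (by positivity), mul_comm]
  have hβexp : β = Real.exp (lam * Real.log (2*s0)) := by
    rw [hβ_def, Real.rpow_def_of_pos (by positivity), mul_comm]
  have hnA : ‖A‖ = α := by
    rw [hA_def, Complex.norm_exp, hla_re, hαexp]
  have hnB : ‖B‖ = β := by
    rw [hB_def, Complex.norm_exp, hlb_re, hβexp]
  have hα_pos : 0 < α := by rw [hα_def]; positivity
  have hβ_pos : 0 < β := by rw [hβ_def]; positivity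
  -- real parts
  have hReA : A.re = α * Real.cos (lam * s) := by
    rw [hA_def, Complex.exp_re, hla_re, hla_im, hαexp]
  have hReB : B.re = β * Real.cos (lam * (s - π/2)) := by
    rw [hB_def, Complex.exp_re, hlb_re, hlb_im, hβexp]
  have hls : lam * s ≤ s := mul_le_of_le_one_left hs0.le hlam1.le
  have hcosA : 1/2 ≤ Real.cos (lam * s) := by
    have h3 : Real.cos (π/3) ≤ Real.cos (lam * s) := by
      apply Real.cos_le_cos_of_nonneg_of_le_pi (by positivity) (by linarith) (by linarith)
    rw [Real.cos_pi_div_three] at h3; exact h3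
  have hcosB : 0 ≤ Real.cos (lam * (s - π/2)) := by
    apply Real.cos_nonneg_of_mem_Icc
    have hsp : s - π/2 ≤ 0 := by linarith
    have hle0 : lam * (s - π/2) ≤ 0 := mul_nonpos_of_nonneg_of_nonpos hlam0.le hsp
    have hge : s - π/2 ≤ lam * (s - π/2) := le_mul_of_le_one_left hsp hlam1.le
    exact ⟨by linarith, by linarith⟩
  have hReA' : 1/2 ≤ A.re := by
    rw [hReA]
    calc (1:ℝ)/2 = 1 * (1/2) := by ring
    _ ≤ α * Real.cos (lam * s) := by
        apply mul_le_mul _ hcosA (by norm_num) (le_of_lt hα_pos)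
        rw [hα_def]
        exact Real.one_le_rpow (by linarith) (le_of_lt hlam0)
  have hReB' : 0 ≤ B.re := by rw [hReB]; positivity
  -- the inner product term
  set R : ℝ := (A * (starRingEnd ℂ) B).re with hR_def
  have hR : R = α * β * Real.cos (lam * (π/2)) := by
    rw [hR_def, hA_def, hB_def, ← Complex.exp_conj, ← Complex.exp_add, Complex.exp_re]
    rw [Complex.add_re, Complex.add_im, Complex.conj_re, Complex.conj_im,
      hla_re, hla_im, hlb_re, hlb_im]
    rw [Real.exp_add, ← hαexp, ← hβexp,
      show lam * s + -(lam * (s - π/2)) = lam * (π/2) by ring]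
  have hlp : lam * (π/2) < π/2 := mul_lt_of_lt_one_left (by linarith) hlam1
  have hlp0 : 0 < lam * (π/2) := by positivity
  have hcosΛ : 0 < Real.cos (lam * (π/2)) :=
    Real.cos_pos_of_mem_Ioo ⟨by linarith, hlp⟩
  have hcosΛ1 : Real.cos (lam * (π/2)) ≤ 1 := Real.cos_le_one _
  have hR_pos : 0 < R := by rw [hR]; positivity
  -- bounds on α β
  have hα2 : α ≤ 2 := by
    rw [hα_def]
    calc (2*c0)^lam ≤ 2^lam := Real.rpow_le_rpow (by positivity) (by linarith) (le_of_lt hlam0)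
    _ ≤ 2^(1:ℝ) := Real.rpow_le_rpow_of_exponent_le (by norm_num) (le_of_lt hlam1)
    _ = 2 := Real.rpow_one 2
  have h2s0t : 2 * s0 ≤ t := by
    have hle := Real.sin_le (le_of_lt hs0)
    rw [← hs0_def] at hle; rw [hs_def] at hle; linarith
  have hβt : β ≤ t ^ lam := by
    rw [hβ_def]
    exact Real.rpow_le_rpow (by positivity) h2s0t (le_of_lt hlam0)
  have htlam2 : t ^ lam ≤ 2 := by
    calc t ^ lam ≤ 2^lam := Real.rpow_le_rpow (le_of_lt ht) (by linarith) (le_of_lt hlam0)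
    _ ≤ 2^(1:ℝ) := Real.rpow_le_rpow_of_exponent_le (by norm_num) (le_of_lt hlam1)
    _ = 2 := Real.rpow_one 2
  have hβ2 : β ≤ 2 := le_trans hβt htlam2
  have hβlow : (2/π)^lam * t^lam ≤ β := by
    have hsin_low : 2/π * t ≤ 2 * s0 := by
      have h := Real.mul_le_sin (x := s) (le_of_lt hs0) (by linarith)
      rw [← hs0_def] at h; rw [hs_def] at h
      linarith
    calc (2/π)^lam * t^lam = (2/π * t)^lam := (Real.mul_rpow (by positivity) (le_of_lt ht)).symm
    _ ≤ (2*s0)^lam := Real.rpow_le_rpow (by positivity) hsin_low (le_of_lt hlam0)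
    _ = β := hβ_def.symm
  -- norms N M
  set N : ℝ := ‖A + B‖ with hN_def
  set M : ℝ := ‖A - B‖ with hM_def
  have hM_nonneg : 0 ≤ M := norm_nonneg _
  have hNhalf : 1/2 ≤ N := by
    calc (1:ℝ)/2 ≤ A.re + B.re := by linarith
    _ = (A + B).re := (Complex.add_re A B).symm
    _ ≤ ‖A + B‖ := Complex.re_le_norm _
  have hN_pos : 0 < N := by linarith
  have hN4 : N ≤ 4 := by
    calc N ≤ ‖A‖ + ‖B‖ := norm_add_le A B
    _ ≤ 2 + 2 := by rw [hnA, hnB]; linarith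
    _ = 4 := by norm_num
  have hNsq : N^2 = α^2 + β^2 + 2*R := by
    rw [hN_def, Complex.sq_norm, Complex.normSq_add,
      ← Complex.sq_norm, ← Complex.sq_norm, hnA, hnB, ← hR_def]
  have hMsq : M^2 = α^2 + β^2 - 2*R := by
    rw [hM_def, Complex.sq_norm, Complex.normSq_sub,
      ← Complex.sq_norm, ← Complex.sq_norm, hnA, hnB, ← hR_def]
  have hMN : M ≤ N := by
    have hsq : M^2 ≤ N^2 := by rw [hMsq, hNsq]; linarith
    exact lens_sq_le M N hM_nonneg hN_pos.le hsq
  have hABne : A + B ≠ 0 := by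
    intro h0
    rw [h0, norm_zero] at hN_def
    rw [hN_def] at hN_pos; exact lt_irrefl 0 hN_pos
  -- identify the lens map
  have hγ : lensMap lam u = (A - B) / (A + B) := by rw [lensMap, hA, hB]
  have hγnorm : ‖lensMap lam u‖ = M / N := by rw [hγ, norm_div, ← hM_def, ← hN_def]
  have h1γ : 1 - lensMap lam u = 2 * B / (A + B) := by
    rw [hγ]; field_simp; ring
  have h1γnorm : ‖1 - lensMap lam u‖ = 2 * β / N := by
    rw [h1γ, norm_div, norm_mul, hnB, ← hN_def]
    norm_num
  refine ⟨?_, ?_, ?_⟩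
  · -- lower bound
    rw [hγnorm]
    have hNM_pos : 0 < N * (N + M) := by positivity
    have heq : 1 - M/N = 4*R / (N*(N+M)) := by
      rw [eq_div_iff (ne_of_gt hNM_pos)]
      have expand : (1 - M/N) * (N*(N+M)) = (N - M)*(N + M) := by
        field_simp
      rw [expand]
      linear_combination hNsq - hMsq
    rw [heq]
    have h32 : N*(N+M) ≤ 32 := by
      have := mul_le_mul hN4 (show N+M ≤ 8 by linarith) (by positivity : (0:ℝ) ≤ N+M) (by norm_num : (0:ℝ) ≤ 4)
      linarith
    have hα1 : 1 ≤ α := Real.one_le_rpow (by linarith) hlam0.le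
    calc Real.cos (lam * (π/2)) * (2/π)^lam / 8 * t ^ lam
        = (Real.cos (lam * (π/2)) * ((2/π)^lam * t^lam)) / 8 := by ring
    _ ≤ R / 8 := by
          rw [hR]
          have h1 : Real.cos (lam*(π/2)) * ((2/π)^lam * t^lam) ≤ Real.cos (lam*(π/2)) * β :=
            mul_le_mul_of_nonneg_left hβlow hcosΛ.le
          have h2 : Real.cos (lam*(π/2)) * β ≤ Real.cos (lam*(π/2)) * (α*β) :=
            mul_le_mul_of_nonneg_left (le_mul_of_one_le_left hβ_pos.le hα1) hcosΛ.le
          have h3 : Real.cos (lam*(π/2)) * (α*β) = α*β*Real.cos (lam*(π/2)) := by ring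
          have h4 : Real.cos (lam*(π/2)) * ((2/π)^lam * t^lam) ≤ α*β*Real.cos (lam*(π/2)) := by linarith
          exact (div_le_div_iff_of_pos_right (by norm_num : (0:ℝ) < 8)).mpr h4
    _ = 4*R/32 := by ring
    _ ≤ 4*R/(N*(N+M)) := by
          apply div_le_div_of_nonneg_left (by linarith) hNM_pos h32
  · rw [hγnorm, h1γnorm]
    have := norm_sub_norm_le (1 : ℂ) (lensMap lam u)
    rw [norm_one, hγnorm, h1γnorm] at this
    exact this
  · rw [h1γnorm]
    rw [div_le_iff₀ hN_pos]
    have h1 : 4 * t^lam * (1/2) ≤ 4 * t^lam * N :=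
      mul_le_mul_of_nonneg_left hNhalf (by positivity)
    have htl : 0 ≤ t ^ lam := by positivity
    linarith

/-- Boundary estimate for the lens map: with `γ(t) = φ_λ(e^{it})`, for `0 < t ≤ π/2`
one has `c t^λ ≤ 1 - |γ(t)| ≤ |1 - γ(t)| ≤ C t^λ`. -/
theorem lensMap_boundary_estimate {lam : ℝ} (hlam0 : 0 < lam) (hlam1 : lam < 1) :
    ∃ c C : ℝ, 0 < c ∧ c < C ∧
      ∀ t : ℝ, 0 < t → t ≤ π / 2 →
        c * t ^ lam ≤ 1 - ‖lensMap lam (Complex.exp (t * Complex.I))‖ ∧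
        1 - ‖lensMap lam (Complex.exp (t * Complex.I))‖ ≤
          ‖1 - lensMap lam (Complex.exp (t * Complex.I))‖ ∧
        ‖1 - lensMap lam (Complex.exp (t * Complex.I))‖ ≤ C * t ^ lam := by
  have hpi : (3:ℝ) < π := Real.pi_gt_three
  refine ⟨Real.cos (lam * (π/2)) * (2/π)^lam / 8, 4, ?_, ?_, ?_⟩
  · have hlp : lam * (π/2) < π/2 := mul_lt_of_lt_one_left (by linarith) hlam1
    have hcosΛ : 0 < Real.cos (lam * (π/2)) :=
      Real.cos_pos_of_mem_Ioo ⟨by nlinarith, hlp⟩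
    positivity
  · have hcos1 : Real.cos (lam * (π/2)) ≤ 1 := Real.cos_le_one _
    have hcos0 : -1 ≤ Real.cos (lam * (π/2)) := Real.neg_one_le_cos _
    have hr1 : (2/π)^lam ≤ 1 :=
      Real.rpow_le_one (by positivity) (by rw [div_le_one (by linarith)]; linarith) hlam0.le
    have hr0 : (0:ℝ) ≤ (2/π)^lam := by positivity
    have : Real.cos (lam * (π/2)) * (2/π)^lam ≤ 1 :=
      mul_le_one₀ hcos1 hr0 hr1
    linarith
  · intro t ht ht2
    exact lens_key hlam0 hlam1 t ht ht2
end

section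
/- Let $T = M_w C_\varphi$ be a bounded weighted composition operator on $H^2(\mathbb{D})$ with $w \in H^\infty$ not identically zero and $\varphi$ a non-constant analytic self-map of $\mathbb{D}$. Let $u_1, \dots, u_n \in \mathbb{D}$ be points such that the images $v_j = \varphi(u_j)$ are pairwise distinct, and let $I_v$ denote the interpolation constant of the finite sequence $(v_j)$ in $H^\infty$. Then the $n$-th approximation number satisfies $a_n(T) \geq \big(\min_{1 \leq j \leq n}|w(u_j)|\big)\big(\min_{1\leq j \leq n}\sqrt{1 - |u_j|^2}\big)\, I_v^{-2}$, up to a universal positive constant. -/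
open Module Metric
open Real intervalIntegral

/-- The Hardy space `H²(𝔻)`, modelled as `ℓ²` via Taylor coefficients. -/
noncomputable abbrev HardyH2 := lp (fun _ : ℕ => ℂ) 2

/-- The reproducing kernel `K_a(z) = (1 - ā z)⁻¹` of `H²(𝔻)`, i.e. the coefficient
sequence `(ā ⁿ)ₙ ∈ ℓ²`. -/
noncomputable def hardyKernel (a : ℂ) (ha : ‖a‖ < 1) : HardyH2 :=
  ⟨fun n => (starRingEnd ℂ a) ^ n, by
    apply memℓp_gen
    have h : Summable fun n : ℕ => (‖a‖ ^ 2) ^ n :=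
      summable_geometric_of_lt_one (by positivity) (by nlinarith [norm_nonneg a])
    refine h.congr fun n => ?_
    have : ((2 : ENNReal)).toReal = ((2 : ℕ) : ℝ) := by norm_num
    rw [this, Real.rpow_natCast]
    simp [norm_pow, ← pow_mul, mul_comm]⟩

/-- The `n`-th approximation number of a bounded operator on `H²`. -/
noncomputable def approxNum (T : HardyH2 →L[ℂ] HardyH2) (n : ℕ) : ℝ :=
    sInf {c : ℝ | ∃ R : HardyH2 →L[ℂ] HardyH2,
      LinearMap.rank (R : HardyH2 →ₗ[ℂ] HardyH2) < (n : Cardinal) ∧ c = ‖T - R‖}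

lemma ortho_exp (m k : ℕ) :
    (∫ θ in (0:ℝ)..(2*π), Complex.exp ((((m:ℂ) - k) * Complex.I) * θ)) =
      if m = k then ((2*π : ℝ) : ℂ) else 0 := by
  rcases eq_or_ne m k with rfl | hmk
  · simp
  · have hc : ((m:ℂ) - k) * Complex.I ≠ 0 := by
      refine mul_ne_zero (sub_ne_zero.mpr ?_) Complex.I_ne_zero
      exact_mod_cast hmk
    rw [if_neg hmk, integral_exp_mul_complex hc]
    have h1 : Complex.exp (((m:ℂ) - k) * Complex.I * ((2*π : ℝ) : ℂ)) = 1 := by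
      have h2 : ((m:ℂ) - k) * Complex.I * ((2*π : ℝ) : ℂ)
          = (((m:ℤ) - (k:ℤ) : ℤ) : ℂ) * (2 * (π:ℂ) * Complex.I) := by
        push_cast; ring
      rw [h2, Complex.exp_int_mul_two_pi_mul_I]
    have h1' : Complex.exp (((m:ℂ) - k) * Complex.I * (2*(π:ℂ))) = 1 := by
      rw [← h1]; norm_num
    simp [h1']

lemma coeff_integral (c : ℕ → ℂ) (h : ℂ → ℂ) (r : ℝ) (hr0 : 0 < r) (hr1 : r < 1)
    (hsum : ∀ z : ℂ, ‖z‖ < 1 → HasSum (fun n => c n * z ^ n) (h z))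
    (hs : Summable fun n => ‖c n‖ * r ^ n) (k : ℕ) :
    (∫ θ in (0:ℝ)..(2*π),
        h ((r:ℂ) * Complex.exp (θ * Complex.I)) * Complex.exp (-(k:ℂ) * Complex.I * θ))
      = ((2*π:ℝ):ℂ) * (c k * (r:ℂ)^k) := by
  have hpi : (0:ℝ) ≤ 2*π := by positivity
  have hz : ∀ θ : ℝ, ‖(r:ℂ) * Complex.exp (θ * Complex.I)‖ < 1 := by
    intro θ
    rw [norm_mul]
    simp [Complex.norm_exp, Complex.norm_real, abs_of_pos hr0,
      Complex.mul_re, hr1]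
  set g : ℕ → ℝ → ℂ := fun n θ =>
    (c n * (r:ℂ)^n) * Complex.exp ((((n:ℂ) - k) * Complex.I) * θ) with hg_def
  have hterm : ∀ (n : ℕ) (θ : ℝ),
      c n * ((r:ℂ) * Complex.exp (θ * Complex.I)) ^ n * Complex.exp (-(k:ℂ) * Complex.I * θ)
        = g n θ := by
    intro n θ
    rw [hg_def]
    simp only [mul_pow, ← Complex.exp_nat_mul]
    rw [mul_assoc, mul_assoc, ← Complex.exp_add, ← mul_assoc]
    ring_nf
  have hg : ∀ θ : ℝ, HasSum (fun n => g n θ)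
      (h ((r:ℂ) * Complex.exp (θ * Complex.I)) * Complex.exp (-(k:ℂ) * Complex.I * θ)) := by
    intro θ
    have := (hsum _ (hz θ)).mul_right (Complex.exp (-(k:ℂ) * Complex.I * θ))
    exact this.congr_fun fun n => (hterm n θ).symm
  have hptwise : ∀ θ : ℝ,
      h ((r:ℂ) * Complex.exp (θ * Complex.I)) * Complex.exp (-(k:ℂ) * Complex.I * θ)
        = ∑' n, g n θ := fun θ => ((hg θ).tsum_eq).symm
  have hgc : ∀ n : ℕ, Continuous (g n) := by
    intro n
    apply Continuous.mul continuous_const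
    exact Complex.continuous_exp.comp (by fun_prop)
  have hgnorm : ∀ (n : ℕ) (θ : ℝ), ‖g n θ‖ = ‖c n‖ * r ^ n := by
    intro n θ
    rw [hg_def]
    simp only [norm_mul, Complex.norm_exp]
    have h0 : ((((n:ℂ) - k) * Complex.I) * (θ:ℂ)).re = 0 := by
      simp [Complex.mul_re, Complex.mul_im]
    rw [h0]
    simp [Complex.norm_real, abs_of_pos hr0]
  rw [integral_of_le hpi]
  calc ∫ θ in Set.Ioc (0:ℝ) (2*π),
        h ((r:ℂ) * Complex.exp (θ * Complex.I)) * Complex.exp (-(k:ℂ) * Complex.I * θ)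
      = ∫ θ in Set.Ioc (0:ℝ) (2*π), ∑' n, g n θ := by
        simp only [hptwise]
    _ = ∑' n, ∫ θ in Set.Ioc (0:ℝ) (2*π), g n θ := by
        refine (MeasureTheory.integral_tsum_of_summable_integral_norm (fun n => (hgc n).integrableOn_Ioc) ?_).symm
        refine Summable.congr (hs.mul_left (2*π)) fun n => ?_
        have : (∫ θ in Set.Ioc (0:ℝ) (2*π), ‖g n θ‖) = (2*π) * (‖c n‖ * r^n) := by
          simp only [hgnorm]
          rw [MeasureTheory.setIntegral_const]
          simp [Real.volume_Ioc, ENNReal.toReal_ofReal hpi, pi_pos.le]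
        rw [this]
    _ = ∑' n, (c n * (r:ℂ)^n) * (if n = k then ((2*π:ℝ):ℂ) else 0) := by
        congr 1
        funext n
        rw [← integral_of_le hpi]
        rw [hg_def]
        rw [integral_const_mul, ortho_exp n k]
    _ = ((2*π:ℝ):ℂ) * (c k * (r:ℂ)^k) := by
        rw [tsum_eq_single k (fun n hn => by simp [hn])]
        simp [mul_comm]

lemma normSq_helper (z : ℂ) : ‖z‖^2 = Complex.normSq z := by
  rw [Complex.sq_norm]

lemma normsub (a b : ℂ) : ‖a - b‖^2 = ‖a‖^2 - 2*(a * (starRingEnd ℂ) b).re + ‖b‖^2 := by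
  rw [normSq_helper, normSq_helper, normSq_helper]
  simp [Complex.normSq_apply, Complex.mul_re, Complex.sub_re, Complex.sub_im,
    Complex.conj_re, Complex.conj_im]
  ring

lemma norm_sq_conj_mul (z : ℂ) : ‖z‖^2 = (z * (starRingEnd ℂ) z).re := by
  rw [Complex.mul_conj, Complex.ofReal_re, normSq_helper]

lemma bessel (c : ℕ → ℂ) (h : ℂ → ℂ) (M r : ℝ) (hr0 : 0 < r) (hr1 : r < 1)
    (hsum : ∀ z : ℂ, ‖z‖ < 1 → HasSum (fun n => c n * z ^ n) (h z))
    (hs : Summable fun n => ‖c n‖ * r ^ n)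
    (hcont : ContinuousOn h (ball (0:ℂ) 1))
    (hb : ∀ z ∈ ball (0:ℂ) 1, ‖h z‖ ≤ M) (N : ℕ) :
    ∑ n ∈ Finset.range N, ‖c n‖^2 * r^(2*n) ≤ M^2 := by
  have hpi : (0:ℝ) ≤ 2*π := by positivity
  have hzb : ∀ θ : ℝ, ((r:ℂ) * Complex.exp (θ * Complex.I)) ∈ ball (0:ℂ) 1 := by
    intro θ
    rw [mem_ball_zero_iff, norm_mul]
    simp [Complex.norm_exp, Complex.norm_real, abs_of_pos hr0,
      Complex.mul_re, hr1]
  set F : ℝ → ℂ := fun θ => h ((r:ℂ) * Complex.exp (θ * Complex.I)) with hF_def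
  set P : ℝ → ℂ := fun θ =>
    ∑ n ∈ Finset.range N, (c n * (r:ℂ)^n) * Complex.exp (((n:ℂ) * Complex.I) * θ) with hP_def
  set S : ℝ := ∑ n ∈ Finset.range N, ‖c n‖^2 * r^(2*n) with hS_def
  have hcirc : Continuous fun θ : ℝ => (r:ℂ) * Complex.exp ((θ:ℂ) * Complex.I) :=
    continuous_const.mul (Complex.continuous_exp.comp
      (Complex.continuous_ofReal.mul continuous_const))
  have hexpc : ∀ a : ℂ, Continuous fun θ : ℝ => Complex.exp (a * (θ:ℂ)) := fun a =>
    Complex.continuous_exp.comp (continuous_const.mul Complex.continuous_ofReal)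
  have hFc : Continuous F := hcont.comp_continuous hcirc hzb
  have hPc : Continuous P := by
    apply continuous_finset_sum
    intro n _
    exact continuous_const.mul (hexpc _)
  have hPconjc : Continuous (fun θ => (starRingEnd ℂ) (P θ)) :=
    Complex.continuous_conj.comp hPc
  have hconj_exp : ∀ (n : ℕ) (θ : ℝ),
      (starRingEnd ℂ) (Complex.exp (((n:ℂ) * Complex.I) * θ)) =
        Complex.exp (-(n:ℂ) * Complex.I * θ) := by
    intro n θ
    rw [← Complex.exp_conj]
    congr 1
    simp only [map_mul, Complex.conj_I, Complex.conj_ofReal, Complex.conj_natCast]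
    ring
  have hnormz : ∀ n : ℕ, Complex.normSq (c n * (r:ℂ)^n) = ‖c n‖^2 * r^(2*n) := by
    intro n
    rw [← normSq_helper, norm_mul, norm_pow, Complex.norm_real, Real.norm_eq_abs,
      abs_of_pos hr0, mul_pow, ← pow_mul, mul_comm n 2]
  have hterm_norm : ∀ n : ℕ,
      ((starRingEnd ℂ) (c n * (r:ℂ)^n)) * (((2*π:ℝ):ℂ) * (c n * (r:ℂ)^n))
        = (((2*π) * (‖c n‖^2 * r^(2*n)) : ℝ) : ℂ) := by
    intro n
    have e1 : ((starRingEnd ℂ) (c n * (r:ℂ)^n)) * (((2*π:ℝ):ℂ) * (c n * (r:ℂ)^n))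
        = ((2*π:ℝ):ℂ) * ((c n * (r:ℂ)^n) * (starRingEnd ℂ) (c n * (r:ℂ)^n)) := by ring
    rw [e1, Complex.mul_conj, ← Complex.ofReal_mul, hnormz n]
  have hJ : (∫ θ in (0:ℝ)..(2*π), F θ * (starRingEnd ℂ) (P θ)) = (((2*π) * S : ℝ) : ℂ) := by
    have hptw : ∀ θ : ℝ, F θ * (starRingEnd ℂ) (P θ)
        = ∑ n ∈ Finset.range N, ((starRingEnd ℂ) (c n * (r:ℂ)^n)) *
            (F θ * Complex.exp (-(n:ℂ) * Complex.I * θ)) := by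
      intro θ
      rw [hP_def]
      simp only [map_sum, map_mul, hconj_exp, Finset.mul_sum]
      refine Finset.sum_congr rfl fun n _ => ?_
      ring
    simp only [hptw]
    have hswap : (∫ θ in (0:ℝ)..(2*π), ∑ n ∈ Finset.range N,
        ((starRingEnd ℂ) (c n * (r:ℂ)^n)) * (F θ * Complex.exp (-(n:ℂ) * Complex.I * θ)))
        = ∑ n ∈ Finset.range N, ∫ θ in (0:ℝ)..(2*π),
            ((starRingEnd ℂ) (c n * (r:ℂ)^n)) * (F θ * Complex.exp (-(n:ℂ) * Complex.I * θ)) :=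
      integral_finset_sum (fun n _ =>
        (continuous_const.mul (hFc.mul (hexpc _))).intervalIntegrable _ _)
    rw [hswap]
    have heach : ∀ n ∈ Finset.range N,
        (∫ θ in (0:ℝ)..(2*π), ((starRingEnd ℂ) (c n * (r:ℂ)^n)) *
          (F θ * Complex.exp (-(n:ℂ) * Complex.I * θ)))
        = (((2*π) * (‖c n‖^2 * r^(2*n)) : ℝ) : ℂ) := by
      intro n _
      rw [integral_const_mul, hF_def]
      rw [coeff_integral c h r hr0 hr1 hsum hs n]
      exact hterm_norm n
    rw [Finset.sum_congr rfl heach, ← Complex.ofReal_sum, hS_def, Finset.mul_sum]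
  have hJP : (∫ θ in (0:ℝ)..(2*π), P θ * (starRingEnd ℂ) (P θ)) = (((2*π) * S : ℝ) : ℂ) := by
    have hptw : ∀ θ : ℝ, P θ * (starRingEnd ℂ) (P θ)
        = ∑ m ∈ Finset.range N, ∑ n ∈ Finset.range N,
            ((c m * (r:ℂ)^m) * (starRingEnd ℂ) (c n * (r:ℂ)^n)) *
              Complex.exp ((((m:ℂ) - n) * Complex.I) * θ) := by
      intro θ
      rw [hP_def]
      rw [map_sum, Finset.sum_mul_sum]
      refine Finset.sum_congr rfl fun m _ => Finset.sum_congr rfl fun n _ => ?_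
      rw [map_mul, hconj_exp]
      rw [mul_mul_mul_comm, ← Complex.exp_add]
      congr 2
      ring
    simp only [hptw]
    have hswap : (∫ θ in (0:ℝ)..(2*π), ∑ m ∈ Finset.range N, ∑ n ∈ Finset.range N,
        ((c m * (r:ℂ)^m) * (starRingEnd ℂ) (c n * (r:ℂ)^n)) *
          Complex.exp ((((m:ℂ) - n) * Complex.I) * θ))
        = ∑ m ∈ Finset.range N, ∫ θ in (0:ℝ)..(2*π), ∑ n ∈ Finset.range N,
            ((c m * (r:ℂ)^m) * (starRingEnd ℂ) (c n * (r:ℂ)^n)) *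
              Complex.exp ((((m:ℂ) - n) * Complex.I) * θ) :=
      integral_finset_sum (fun m _ => (continuous_finset_sum _ (fun n _ =>
        continuous_const.mul (hexpc _))).intervalIntegrable _ _)
    rw [hswap]
    have heach : ∀ m ∈ Finset.range N,
        (∫ θ in (0:ℝ)..(2*π), ∑ n ∈ Finset.range N,
            ((c m * (r:ℂ)^m) * (starRingEnd ℂ) (c n * (r:ℂ)^n)) *
              Complex.exp ((((m:ℂ) - n) * Complex.I) * θ))
          = (((2*π) * (‖c m‖^2 * r^(2*m)) : ℝ) : ℂ) := by
      intro m hm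
      have hswap2 : (∫ θ in (0:ℝ)..(2*π), ∑ n ∈ Finset.range N,
          ((c m * (r:ℂ)^m) * (starRingEnd ℂ) (c n * (r:ℂ)^n)) *
            Complex.exp ((((m:ℂ) - n) * Complex.I) * θ))
          = ∑ n ∈ Finset.range N, ∫ θ in (0:ℝ)..(2*π),
              ((c m * (r:ℂ)^m) * (starRingEnd ℂ) (c n * (r:ℂ)^n)) *
                Complex.exp ((((m:ℂ) - n) * Complex.I) * θ) :=
        integral_finset_sum (fun n _ =>
          (continuous_const.mul (hexpc _)).intervalIntegrable _ _)
      rw [hswap2]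
      have heach2 : ∀ n ∈ Finset.range N,
          (∫ θ in (0:ℝ)..(2*π), ((c m * (r:ℂ)^m) * (starRingEnd ℂ) (c n * (r:ℂ)^n)) *
              Complex.exp ((((m:ℂ) - n) * Complex.I) * θ))
            = ((c m * (r:ℂ)^m) * (starRingEnd ℂ) (c n * (r:ℂ)^n)) *
                (if m = n then ((2*π:ℝ):ℂ) else 0) := by
        intro n _
        rw [integral_const_mul, ortho_exp m n]
      rw [Finset.sum_congr rfl heach2]
      rw [Finset.sum_eq_single m (fun n _ hn => by rw [if_neg (Ne.symm hn), mul_zero])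
        (fun hm' => absurd hm hm')]
      rw [if_pos rfl]
      have e1 : ((c m * (r:ℂ)^m) * (starRingEnd ℂ) (c m * (r:ℂ)^m)) * ((2*π:ℝ):ℂ)
          = ((starRingEnd ℂ) (c m * (r:ℂ)^m)) * (((2*π:ℝ):ℂ) * (c m * (r:ℂ)^m)) := by ring
      rw [e1, hterm_norm m]
    rw [Finset.sum_congr rfl heach, ← Complex.ofReal_sum, hS_def, Finset.mul_sum]
  have hIcF : IntervalIntegrable (fun θ => F θ * (starRingEnd ℂ) (P θ))
      MeasureTheory.volume 0 (2*π) := (hFc.mul hPconjc).intervalIntegrable _ _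
  have hIcP : IntervalIntegrable (fun θ => P θ * (starRingEnd ℂ) (P θ))
      MeasureTheory.volume 0 (2*π) := (hPc.mul hPconjc).intervalIntegrable _ _
  have hreF : (∫ θ in (0:ℝ)..(2*π), (F θ * (starRingEnd ℂ) (P θ)).re) = (2*π) * S := by
    have e := Complex.reCLM.intervalIntegral_comp_comm hIcF
    simp only [Complex.reCLM_apply] at e
    rw [e, hJ, Complex.ofReal_re]
  have hreP : (∫ θ in (0:ℝ)..(2*π), ‖P θ‖^2) = (2*π) * S := by
    have e0 : ∀ θ : ℝ, ‖P θ‖^2 = (P θ * (starRingEnd ℂ) (P θ)).re := fun θ => norm_sq_conj_mul _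
    simp only [e0]
    have e := Complex.reCLM.intervalIntegral_comp_comm hIcP
    simp only [Complex.reCLM_apply] at e
    rw [e, hJP, Complex.ofReal_re]
  have hintF2 : IntervalIntegrable (fun θ => ‖F θ‖^2) MeasureTheory.volume 0 (2*π) :=
    ((hFc.norm.pow 2).intervalIntegrable _ _)
  have hintP2 : IntervalIntegrable (fun θ => ‖P θ‖^2) MeasureTheory.volume 0 (2*π) :=
    ((hPc.norm.pow 2).intervalIntegrable _ _)
  have hintRe : IntervalIntegrable (fun θ => (F θ * (starRingEnd ℂ) (P θ)).re)
      MeasureTheory.volume 0 (2*π) :=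
    ((Complex.continuous_re.comp (hFc.mul hPconjc)).intervalIntegrable _ _)
  have hsplit : (∫ θ in (0:ℝ)..(2*π), ‖F θ - P θ‖^2)
      = (∫ θ in (0:ℝ)..(2*π), ‖F θ‖^2) - 2*((2*π) * S) + (2*π) * S := by
    have e : ∀ θ : ℝ, ‖F θ - P θ‖^2
        = ‖F θ‖^2 - 2*(F θ * (starRingEnd ℂ) (P θ)).re + ‖P θ‖^2 := fun θ => normsub _ _
    simp only [e]
    rw [integral_add (IntervalIntegrable.sub hintF2 (hintRe.const_mul 2)) hintP2,
      integral_sub hintF2 (hintRe.const_mul 2), integral_const_mul, hreF, hreP]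
  have hnonneg : (0:ℝ) ≤ ∫ θ in (0:ℝ)..(2*π), ‖F θ - P θ‖^2 := by
    apply intervalIntegral.integral_nonneg hpi
    intro θ _
    positivity
  have hM0 : 0 ≤ M := le_trans (norm_nonneg _) (hb _ (hzb 0))
  have hFb : (∫ θ in (0:ℝ)..(2*π), ‖F θ‖^2) ≤ (2*π) * M^2 := by
    have e : (∫ _ in (0:ℝ)..(2*π), (M:ℝ)^2) = (2*π) * M^2 := by
      simp [mul_comm]
    rw [← e]
    apply intervalIntegral.integral_mono_on hpi hintF2 intervalIntegrable_const
    intro θ _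
    have := hb _ (hzb θ)
    nlinarith [norm_nonneg (F θ)]
  have hpipos : (0:ℝ) < 2*π := by positivity
  nlinarith [hnonneg, hsplit, hFb]

lemma exists_coeff_seq {h : ℂ → ℂ} {M : ℝ}
    (hd : DifferentiableOn ℂ h (ball (0:ℂ) 1))
    (hb : ∀ z ∈ ball (0:ℂ) 1, ‖h z‖ ≤ M) :
    ∃ x : HardyH2, ‖x‖ ≤ M ∧
      ∀ a : ℂ, ‖a‖ < 1 → HasSum (fun n => a ^ n * x n) (h a) := by
  have hM0 : 0 ≤ M := le_trans (norm_nonneg _) (hb 0 (by simp))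
  have hps : ∀ s : NNReal, 0 < (s:ℝ) → (s:ℝ) < 1 →
      HasFPowerSeriesOnBall h (cauchyPowerSeries h 0 (s:ℝ)) 0 s := by
    intro s h0 h1
    exact DifferentiableOn.hasFPowerSeriesOnBall
      (hd.mono (closedBall_subset_ball h1)) (by exact_mod_cast h0)
  set p := cauchyPowerSeries h 0 (((1/2 : NNReal)):ℝ) with hp_def
  have hhalf0 : (0:ℝ) < ((1/2 : NNReal):ℝ) := by norm_num
  have hhalf1 : ((1/2 : NNReal):ℝ) < 1 := by norm_num
  have hbase : HasFPowerSeriesOnBall h p 0 (1/2 : NNReal) := hps _ hhalf0 hhalf1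
  have huniq : ∀ s : NNReal, 0 < (s:ℝ) → (s:ℝ) < 1 →
      cauchyPowerSeries h 0 (s:ℝ) = p := fun s h0 h1 =>
    (hps s h0 h1).hasFPowerSeriesAt.eq_formalMultilinearSeries hbase.hasFPowerSeriesAt
  set c : ℕ → ℂ := fun n => p.coeff n with hc_def
  have hsum : ∀ z : ℂ, ‖z‖ < 1 → HasSum (fun n => c n * z ^ n) (h z) := by
    intro z hz
    set s : NNReal := Real.toNNReal ((‖z‖ + 1)/2) with hs_def
    have hs0 : (s:ℝ) = (‖z‖ + 1)/2 := Real.coe_toNNReal _ (by positivity)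
    have hs1 : 0 < (s:ℝ) := by rw [hs0]; positivity
    have hs2 : (s:ℝ) < 1 := by rw [hs0]; linarith
    have hzs : ‖z‖ < (s:ℝ) := by rw [hs0]; linarith
    have hmem : z ∈ EMetric.ball (0:ℂ) (s:ENNReal) := by
      rw [show EMetric.ball (0:ℂ) (s:ENNReal) = Metric.eball 0 s from rfl, mem_eball_zero_iff]
      exact_mod_cast hzs
    have h1 := (hps s hs1 hs2).hasSum hmem
    rw [huniq s hs1 hs2] at h1
    simp only [FormalMultilinearSeries.apply_eq_pow_smul_coeff, smul_eq_mul, zero_add] at h1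
    exact h1.congr_fun fun n => mul_comm _ _
  have hsummable : ∀ r : ℝ, 0 < r → r < 1 → Summable fun n => ‖c n‖ * r ^ n := by
    intro r hr0 hr1
    set s : NNReal := Real.toNNReal ((r + 1)/2) with hs_def
    have hs0 : (s:ℝ) = (r + 1)/2 := Real.coe_toNNReal _ (by positivity)
    have hs1 : 0 < (s:ℝ) := by rw [hs0]; positivity
    have hs2 : (s:ℝ) < 1 := by rw [hs0]; linarith
    have hrs : r < (s:ℝ) := by rw [hs0]; linarith
    have hrad : (r.toNNReal : ENNReal) < p.radius := by
      refine lt_of_lt_of_le ?_ (huniq s hs1 hs2 ▸ (hps s hs1 hs2).r_le)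
      exact_mod_cast (by rw [Real.coe_toNNReal _ hr0.le]; exact hrs :
        ((r.toNNReal : ℝ) < (s:ℝ)))
    have := p.summable_norm_mul_pow hrad
    refine this.congr fun n => ?_
    rw [FormalMultilinearSeries.norm_apply_eq_norm_coef, Real.coe_toNNReal _ hr0.le]
  have hbound : ∀ N : ℕ, ∑ n ∈ Finset.range N, ‖c n‖^2 ≤ M^2 := by
    intro N
    have key : ∀ r : ℝ, 0 < r → r < 1 →
        ∑ n ∈ Finset.range N, ‖c n‖^2 * r^(2*n) ≤ M^2 := fun r h0 h1 =>
      bessel c h M r h0 h1 hsum (hsummable r h0 h1) hd.continuousOn hb N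
    set q : ℝ → ℝ := fun r => ∑ n ∈ Finset.range N, ‖c n‖^2 * r^(2*n) with hq_def
    have hqc : Continuous q := by
      apply continuous_finset_sum
      intro n _
      exact continuous_const.mul (continuous_pow _)
    have hq1 : q 1 = ∑ n ∈ Finset.range N, ‖c n‖^2 := by
      simp [hq_def]
    have htend : Filter.Tendsto q (nhdsWithin 1 (Set.Iio 1)) (nhds (q 1)) :=
      (hqc.tendsto 1).mono_left nhdsWithin_le_nhds
    have hev : ∀ᶠ r in nhdsWithin (1:ℝ) (Set.Iio 1), q r ≤ M^2 := by
      filter_upwards [Ioo_mem_nhdsLT (by norm_num : (0:ℝ) < 1)]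
        with r hr
      exact key r hr.1 hr.2
    have := le_of_tendsto htend hev
    rwa [hq1] at this
  have hmem : Memℓp c 2 := by
    apply memℓp_gen
    have h2 : ((2 : ENNReal)).toReal = ((2 : ℕ) : ℝ) := by norm_num
    have : Summable fun n => ‖c n‖ ^ (2:ℕ) := by
      apply summable_of_sum_range_le (c := M^2) (fun n => by positivity)
      intro n
      exact_mod_cast hbound n
    refine this.congr fun n => ?_
    rw [h2, Real.rpow_natCast]
  refine ⟨⟨c, hmem⟩, ?_, ?_⟩
  · have h2 : ((2 : ENNReal)).toReal = (2 : ℝ) := by norm_num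
    have hn := lp.norm_rpow_eq_tsum (p := 2) (by norm_num) (⟨c, hmem⟩ : HardyH2)
    rw [h2] at hn
    have htsum : ∑' n, ‖c n‖ ^ (2:ℝ) ≤ M^2 := by
      have : ∀ n, ‖c n‖ ^ (2:ℝ) = ‖c n‖^(2:ℕ) := fun n => by
        rw [← Real.rpow_natCast]; norm_num
      rw [tsum_congr this]
      exact tsum_le_of_sum_range_le (fun n => by positivity) (fun n => by exact_mod_cast hbound n)
    have hx2 : ‖(⟨c, hmem⟩ : HardyH2)‖ ^ (2:ℝ) ≤ M ^ 2 := by rw [hn]; exact htsum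
    have : ‖(⟨c, hmem⟩ : HardyH2)‖ ^ (2:ℕ) ≤ M ^ 2 := by
      rw [← Real.rpow_natCast]; exact_mod_cast hx2
    have hs := Real.sqrt_le_sqrt this
    rwa [Real.sqrt_sq (norm_nonneg _), Real.sqrt_sq hM0] at hs
  · intro a ha
    have := hsum a ha
    exact this.congr_fun fun n => mul_comm _ _

lemma inner_hardyKernel (a : ℂ) (ha : ‖a‖ < 1) (x : HardyH2) :
    (inner ℂ (hardyKernel a ha) x : ℂ) = ∑' n, a ^ n * x n := by
  rw [lp.inner_eq_tsum]
  refine tsum_congr fun n => ?_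
  rw [RCLike.inner_apply]
  show x n * (starRingEnd ℂ) ((starRingEnd ℂ a) ^ n) = a ^ n * x n
  rw [map_pow, Complex.conj_conj, mul_comm]

lemma norm_hardyKernel (a : ℂ) (ha : ‖a‖ < 1) :
    ‖hardyKernel a ha‖ = Real.sqrt ((1 - ‖a‖^2)⁻¹) := by
  have h2 : (0:ℝ) < ((2:ENNReal)).toReal := by norm_num
  have hn := lp.norm_rpow_eq_tsum h2 (hardyKernel a ha)
  have hterm : ∀ n : ℕ, ‖(hardyKernel a ha) n‖ ^ ((2:ENNReal)).toReal = (‖a‖^2)^n := by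
    intro n
    show ‖(starRingEnd ℂ a)^n‖ ^ _ = _
    rw [norm_pow, RCLike.norm_conj,
      show ((2:ENNReal)).toReal = ((2:ℕ):ℝ) by norm_num, Real.rpow_natCast,
      ← pow_mul, ← pow_mul, mul_comm]
  have hsum : (∑' n : ℕ, ‖(hardyKernel a ha) n‖ ^ ((2:ENNReal)).toReal) = (1 - ‖a‖^2)⁻¹ := by
    rw [tsum_congr hterm, tsum_geometric_of_lt_one (by positivity) (by nlinarith [norm_nonneg a])]
  have hsq : ‖hardyKernel a ha‖ ^ (2:ℕ) = (1 - ‖a‖^2)⁻¹ := by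
    have h3 := hn.trans hsum
    rwa [show ((2:ENNReal)).toReal = ((2:ℕ):ℝ) by norm_num, Real.rpow_natCast] at h3
  rw [← hsq, Real.sqrt_sq (norm_nonneg _)]

lemma norm_hardyKernel_mul (a : ℂ) (ha : ‖a‖ < 1) :
    ‖hardyKernel a ha‖ * Real.sqrt (1 - ‖a‖^2) = 1 := by
  have hpos : 0 < 1 - ‖a‖^2 := by nlinarith [norm_nonneg a]
  rw [norm_hardyKernel a ha, Real.sqrt_inv]
  exact inv_mul_cancel₀ (by positivity)


set_option maxHeartbeats 2000000 in
/-- Lower bound for approximation numbers of a weighted composition operator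
`T = M_w C_φ` on `H²(𝔻)` (characterized by the adjoint mapping equation
`T* K_a = conj (w a) • K_{φ(a)}`) in terms of the `H^∞`-interpolation constant `I_v`
of the images `v_j = φ(u_j)` of `n+1` points `u_j ∈ 𝔻`:
`a_{n+1}(T) ≥ κ (min_j |w(u_j)|)(min_j √(1-|u_j|²)) I_v⁻²` with `κ` universal. -/
theorem approxNum_lower_bound_interpolation :
    ∃ κ : ℝ, 0 < κ ∧
      ∀ (T : HardyH2 →L[ℂ] HardyH2) (w φ : ℂ → ℂ)
        (hφ : ∀ a : ℂ, ‖a‖ < 1 → ‖φ a‖ < 1)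
        (n : ℕ) (u : Fin (n + 1) → ℂ) (hu : ∀ j, ‖u j‖ < 1),
        Function.Injective (fun j => φ (u j)) →
        (∀ (a : ℂ) (ha : ‖a‖ < 1),
          ContinuousLinearMap.adjoint T (hardyKernel a ha) =
            (starRingEnd ℂ (w a)) • hardyKernel (φ a) (hφ a ha)) →
        ∀ Iv : ℝ,
          (∀ c : Fin (n + 1) → ℂ, ∃ h : ℂ → ℂ,
            DifferentiableOn ℂ h (ball (0 : ℂ) 1) ∧
            (∀ z ∈ ball (0 : ℂ) 1, ‖h z‖ ≤ Iv * ⨆ j, ‖c j‖) ∧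
            ∀ j, h (φ (u j)) = c j) →
          κ * (⨅ j, ‖w (u j)‖) * (⨅ j, Real.sqrt (1 - ‖u j‖ ^ 2)) / Iv ^ 2 ≤
            approxNum T (n + 1) := by
  refine ⟨1, one_pos, ?_⟩
  intro T w φ hφ n u hu _hinj hadj Iv hinterp
  set v : Fin (n+1) → ℂ := fun j => φ (u j) with hv_def
  have hv : ∀ j, ‖v j‖ < 1 := fun j => hφ _ (hu j)
  set K : Fin (n+1) → HardyH2 := fun j => hardyKernel (v j) (hv j) with hK_def
  set A : ℝ := ⨅ j, ‖w (u j)‖ with hA_def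
  set B : ℝ := ⨅ j, Real.sqrt (1 - ‖u j‖ ^ 2) with hB_def
  have hA0 : 0 ≤ A := le_ciInf fun j => norm_nonneg _
  have hB0 : 0 ≤ B := le_ciInf fun j => Real.sqrt_nonneg _
  have hAle : ∀ k, A ≤ ‖w (u k)‖ := fun k => ciInf_le (Finite.bddBelow_range _) k
  have hBle : ∀ k, B ≤ Real.sqrt (1 - ‖u k‖ ^ 2) := fun k =>
    ciInf_le (Finite.bddBelow_range _) k
  -- interpolation gives ℓ² interpolants
  have hinterp2 : ∀ c : Fin (n+1) → ℂ, ∃ x : HardyH2,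
      ‖x‖ ≤ Iv * (⨆ j, ‖c j‖) ∧ ∀ j, (inner ℂ (K j) x : ℂ) = c j := by
    intro c
    obtain ⟨h, hd, hbd, hval⟩ := hinterp c
    obtain ⟨x, hxn, hxs⟩ := exists_coeff_seq hd (fun z hz => hbd z hz)
    refine ⟨x, hxn, fun j => ?_⟩
    rw [hK_def, inner_hardyKernel, (hxs (v j) (hv j)).tsum_eq]
    exact hval j
  -- Iv ≥ 1
  have hIv1 : (1:ℝ) ≤ Iv := by
    obtain ⟨h, hd, hbd, hval⟩ := hinterp (fun _ => 1)
    have h0 := hbd (v 0) (mem_ball_zero_iff.mpr (hv 0))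
    rw [hval 0] at h0
    simpa [ciSup_const] using h0
  have hIv0 : (0:ℝ) < Iv := lt_of_lt_of_le one_pos hIv1
  -- linear independence of the kernels
  have hKli : ∀ lam : Fin (n+1) → ℂ, (∑ i, lam i • K i) = 0 → lam = 0 := by
    intro lam hlam
    funext j
    obtain ⟨x, _, hx⟩ := hinterp2 (fun i => if i = j then 1 else 0)
    have h1 : (inner ℂ (∑ i, lam i • K i) x : ℂ) = (starRingEnd ℂ) (lam j) := by
      rw [sum_inner]
      rw [Finset.sum_eq_single j (fun i _ hij => by
        rw [inner_smul_left, hx i, if_neg hij, mul_zero]) (fun hj => absurd (Finset.mem_univ j) hj)]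
      rw [inner_smul_left, hx j, if_pos rfl, mul_one]
    rw [hlam, inner_zero_left] at h1
    have := h1.symm
    rwa [map_eq_zero] at this
  -- main estimate over all finite-rank R
  have key : ∀ R : HardyH2 →L[ℂ] HardyH2,
      LinearMap.rank (R : HardyH2 →ₗ[ℂ] HardyH2) < ((n+1 : ℕ) : Cardinal) →
      1 * A * B / Iv ^ 2 ≤ ‖T - R‖ := by
    intro R hrank
    set Φ : (Fin (n+1) → ℂ) →ₗ[ℂ] HardyH2 := Fintype.linearCombination ℂ K with hΦ_def
    set L : (Fin (n+1) → ℂ) →ₗ[ℂ] HardyH2 := (R : HardyH2 →ₗ[ℂ] HardyH2) ∘ₗ Φ with hL_def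
    have hker : ∃ lam : Fin (n+1) → ℂ, lam ≠ 0 ∧ L lam = 0 := by
      by_contra hno
      push_neg at hno
      have hinj : Function.Injective L := by
        rw [injective_iff_map_eq_zero]
        intro lam hl
        by_contra hlam0
        exact hno lam hlam0 hl
      have h1 : LinearMap.rank L = ((n+1 : ℕ) : Cardinal) :=
        (rank_range_of_injective L hinj).trans (rank_fin_fun (n+1))
      have h2 : LinearMap.rank L ≤ LinearMap.rank (R : HardyH2 →ₗ[ℂ] HardyH2) :=
        LinearMap.rank_comp_le_left _ _
      have h3 : ((n+1 : ℕ) : Cardinal) ≤ LinearMap.rank (R : HardyH2 →ₗ[ℂ] HardyH2) := by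
        rw [← h1]; exact h2
      exact absurd (lt_of_le_of_lt h3 hrank) (lt_irrefl _)
    obtain ⟨lam, hlam0, hLlam⟩ := hker
    set g : HardyH2 := Φ lam with hg_def
    have hRg : R g = 0 := hLlam
    have hgsum : g = ∑ i, lam i • K i := Fintype.linearCombination_apply ℂ K lam
    have hg0 : g ≠ 0 := by
      intro hg
      exact hlam0 (hKli lam (by rw [← hgsum]; exact hg))
    have hgn : 0 < ‖g‖ := norm_pos_iff.mpr hg0
    set G : Fin (n+1) → ℂ := fun k => (inner ℂ (K k) g : ℂ) with hG_def
    set Sg : ℝ := ⨆ k, ‖G k‖ with hSg_def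
    have hSgle : ∀ k, ‖G k‖ ≤ Sg := fun k =>
      le_ciSup (f := fun k => ‖G k‖) (Finite.bddAbove_range _) k
    -- ‖g‖ ≤ Iv * Sg  (minimal norm property)
    have hinner_gg : (inner ℂ g g : ℂ) = ∑ j, (starRingEnd ℂ) (lam j) * G j := by
      nth_rewrite 1 [hgsum]
      rw [sum_inner]
      exact Finset.sum_congr rfl fun j _ => by rw [inner_smul_left, hG_def]
    have hgle : ‖g‖ ≤ Iv * Sg := by
      obtain ⟨x, hxn, hx⟩ := hinterp2 G
      have hinner_gx : (inner ℂ g x : ℂ) = (inner ℂ g g : ℂ) := by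
        rw [hinner_gg]
        nth_rewrite 1 [hgsum]
        rw [sum_inner]
        exact Finset.sum_congr rfl fun j _ => by rw [inner_smul_left, hx j]
      have h1 : ‖g‖^2 = ‖(inner ℂ g x : ℂ)‖ := by
        rw [hinner_gx, inner_self_eq_norm_sq_to_K, norm_pow, RCLike.norm_ofReal,
          abs_of_nonneg (norm_nonneg g)]
      have h2 : ‖(inner ℂ g x : ℂ)‖ ≤ ‖g‖ * ‖x‖ := norm_inner_le_norm _ _
      have h3 : ‖g‖^2 ≤ ‖g‖ * (Iv * Sg) := by
        rw [h1]
        exact le_trans h2 (mul_le_mul_of_nonneg_left hxn (norm_nonneg _))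
      nlinarith
    -- A * B * Sg ≤ ‖T g‖
    have hTg : ∀ k, A * B * ‖G k‖ ≤ ‖T g‖ := by
      intro k
      have hadj_inner : (inner ℂ (hardyKernel (u k) (hu k)) (T g) : ℂ) = w (u k) * G k := by
        rw [← ContinuousLinearMap.adjoint_inner_left, hadj (u k) (hu k), inner_smul_left]
        rw [Complex.conj_conj]
      have h1 : ‖w (u k) * G k‖ ≤ ‖hardyKernel (u k) (hu k)‖ * ‖T g‖ := by
        rw [← hadj_inner]
        exact norm_inner_le_norm _ _
      have h2 : ‖w (u k)‖ * ‖G k‖ * Real.sqrt (1 - ‖u k‖^2)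
          ≤ (‖hardyKernel (u k) (hu k)‖ * Real.sqrt (1 - ‖u k‖^2)) * ‖T g‖ := by
        rw [← norm_mul]
        calc ‖w (u k) * G k‖ * Real.sqrt (1 - ‖u k‖^2)
            ≤ (‖hardyKernel (u k) (hu k)‖ * ‖T g‖) * Real.sqrt (1 - ‖u k‖^2) :=
              mul_le_mul_of_nonneg_right h1 (Real.sqrt_nonneg _)
          _ = (‖hardyKernel (u k) (hu k)‖ * Real.sqrt (1 - ‖u k‖^2)) * ‖T g‖ := by ring
      rw [norm_hardyKernel_mul (u k) (hu k), one_mul] at h2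
      calc A * B * ‖G k‖ ≤ ‖w (u k)‖ * Real.sqrt (1 - ‖u k‖^2) * ‖G k‖ := by
            apply mul_le_mul (mul_le_mul (hAle k) (hBle k) hB0 (norm_nonneg _))
              le_rfl (norm_nonneg _) (by positivity)
        _ = ‖w (u k)‖ * ‖G k‖ * Real.sqrt (1 - ‖u k‖^2) := by ring
        _ ≤ ‖T g‖ := h2
    have hABSg : A * B * Sg ≤ ‖T g‖ := by
      rw [show A * B * Sg = A * B * ⨆ k, ‖G k‖ from rfl]
      rw [Real.mul_iSup_of_nonneg (by positivity)]
      exact ciSup_le hTg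
    -- conclude
    have hTgle : ‖T g‖ ≤ ‖T - R‖ * ‖g‖ := by
      have : (T - R) g = T g := by
        rw [ContinuousLinearMap.sub_apply, hRg, sub_zero]
      rw [← this]
      exact (T - R).le_opNorm g
    have hchain : A * B * ‖g‖ ≤ Iv * (‖T - R‖ * ‖g‖) := by
      calc A * B * ‖g‖ ≤ A * B * (Iv * Sg) :=
            mul_le_mul_of_nonneg_left hgle (by positivity)
        _ = Iv * (A * B * Sg) := by ring
        _ ≤ Iv * ‖T g‖ := mul_le_mul_of_nonneg_left hABSg hIv0.le
        _ ≤ Iv * (‖T - R‖ * ‖g‖) := mul_le_mul_of_nonneg_left hTgle hIv0.le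
    have hfinal : A * B ≤ Iv * ‖T - R‖ := by
      have := (mul_le_mul_iff_of_pos_right hgn).mp (by linarith [hchain] : A * B * ‖g‖ ≤ Iv * ‖T - R‖ * ‖g‖)
      linarith
    rw [one_mul, div_le_iff₀ (by positivity)]
    nlinarith [norm_nonneg (T - R), mul_le_mul_of_nonneg_right hIv1 (norm_nonneg (T - R))]
  -- apply to the infimum
  unfold approxNum
  apply le_csInf
  · refine ⟨‖T - 0‖, 0, ?_, rfl⟩
    rw [show ((0 : HardyH2 →L[ℂ] HardyH2) : HardyH2 →ₗ[ℂ] HardyH2) = 0 from rfl,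
      LinearMap.rank_zero]
    exact_mod_cast Nat.succ_pos n
  · rintro b ⟨R, hrank, rfl⟩
    exact key R hrank
end

section
/- Let $0 < \lambda < 1$ and let $m_\lambda(z) = \big(\frac{1 - \varphi_\lambda(z)^2}{1 - z^2}\big)^{1/2}$ where $\varphi_\lambda$ is the lens map. Then for all $z \in \mathbb{D}$, $|m_\lambda(z)| \leq 2\,|1 - z^2|^{(\lambda - 1)/2}$. -/
open Complex Metric

set_option maxHeartbeats 1000000

/-- For `m_λ(z) = ((1 - φ_λ(z)²)/(1 - z²))^{1/2}` one has
`|m_λ(z)| ≤ 2 |1 - z²|^{(λ-1)/2}` on `𝔻`. -/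
theorem abs_mlam_le {lam : ℝ} (hlam0 : 0 < lam) (hlam1 : lam < 1) :
    ∀ z ∈ ball (0 : ℂ) 1,
      ‖((1 - lensMap lam z ^ 2) / (1 - z ^ 2)) ^ ((1 : ℂ) / 2)‖ ≤
        2 * ‖(1 : ℂ) - z ^ 2‖ ^ ((lam - 1) / 2) := by
  intro z hz
  rw [mem_ball_zero_iff] at hz
  have hre1 : 0 < (1 + z).re := by
    have := Complex.abs_re_le_norm z
    simp only [Complex.add_re, Complex.one_re]
    have := abs_lt.mp (lt_of_le_of_lt this hz)
    linarith [this.1]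
  have hre2 : 0 < (1 - z).re := by
    have := Complex.abs_re_le_norm z
    simp only [Complex.sub_re, Complex.one_re]
    have := abs_lt.mp (lt_of_le_of_lt this hz)
    linarith [this.2]
  have h1 : (1 + z) ≠ 0 := fun h => by simp [h] at hre1
  have h2 : (1 - z) ≠ 0 := fun h => by simp [h] at hre2
  obtain ⟨A, hA⟩ : ∃ A : ℂ, A = (1 + z) ^ (lam : ℂ) := ⟨_, rfl⟩
  obtain ⟨B, hB⟩ : ∃ B : ℂ, B = (1 - z) ^ (lam : ℂ) := ⟨_, rfl⟩
  -- Re (A * conj B) ≥ 0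
  obtain ⟨u, hu⟩ : ∃ u : ℂ, u = (1 + z) * (starRingEnd ℂ) (1 - z) := ⟨_, rfl⟩
  have hure : 0 < u.re := by
    rw [hu]
    simp only [ Complex.mul_re, Complex.conj_re, Complex.conj_im, Complex.sub_re,
      Complex.sub_im, Complex.add_re, Complex.add_im, Complex.one_re, Complex.one_im]
    have h := Complex.sq_norm z
    rw [Complex.normSq_apply] at h
    nlinarith [norm_nonneg z]
  have hune : u ≠ 0 := fun h => by simp [h] at hure
  have harg1 : |(1 + z).arg| < Real.pi / 2 :=
    Complex.abs_arg_lt_pi_div_two_iff.mpr (Or.inl hre1)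
  have harg2 : |((starRingEnd ℂ) (1 - z)).arg| < Real.pi / 2 := by
    refine Complex.abs_arg_lt_pi_div_two_iff.mpr (Or.inl ?_)
    simpa using hre2
  have hargu : |u.arg| < Real.pi / 2 :=
    Complex.abs_arg_lt_pi_div_two_iff.mpr (Or.inl hure)
  have hlogu : Complex.log u = Complex.log (1 + z) + Complex.log ((starRingEnd ℂ) (1 - z)) := by
    rw [hu]
    refine Complex.log_mul h1 ((map_ne_zero (starRingEnd ℂ)).mpr h2) ?_
    constructor
    · have := abs_lt.mp harg1; have := abs_lt.mp harg2; linarith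
    · have := abs_lt.mp harg1; have := abs_lt.mp harg2
      have hpi := Real.pi_pos; linarith
  have harg2pi : (1 - z).arg ≠ Real.pi := by
    intro h
    have := Complex.arg_eq_pi_iff.mp h
    linarith [this.1]
  have hAB : A * (starRingEnd ℂ) B = u ^ (lam : ℂ) := by
    rw [hA, hB, Complex.cpow_def_of_ne_zero h1, Complex.cpow_def_of_ne_zero h2,
      Complex.cpow_def_of_ne_zero hune, ← Complex.exp_conj, hlogu]
    rw [← Complex.exp_add]
    congr 1
    rw [map_mul, Complex.conj_ofReal, ← Complex.log_conj _ harg2pi]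
    ring
  have hReAB : 0 ≤ (A * (starRingEnd ℂ) B).re := by
    rw [hAB, Complex.cpow_def_of_ne_zero hune, Complex.exp_re]
    apply mul_nonneg (Real.exp_nonneg _)
    apply Real.cos_nonneg_of_mem_Icc
    constructor
    · simp only [Complex.mul_im, Complex.ofReal_re, Complex.ofReal_im, Complex.log_im]
      have := abs_lt.mp hargu
      nlinarith
    · simp only [Complex.mul_im, Complex.ofReal_re, Complex.ofReal_im, Complex.log_im]
      have := abs_lt.mp hargu
      nlinarith
  -- ‖A + B‖ ≥ 1
  have hnormSq : Complex.normSq (A + B) =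
      Complex.normSq A + Complex.normSq B + 2 * (A * (starRingEnd ℂ) B).re :=
    Complex.normSq_add A B
  have hmax : 1 ≤ Complex.normSq A ∨ 1 ≤ Complex.normSq B := by
    have hsum : (2:ℝ) ≤ Complex.normSq (1 + z) + Complex.normSq (1 - z) := by
      have : Complex.normSq (1 + z) + Complex.normSq (1 - z) = 2 + 2 * Complex.normSq z := by
        simp only [Complex.normSq_apply, Complex.add_re, Complex.add_im, Complex.sub_re,
          Complex.sub_im, Complex.one_re, Complex.one_im]
        ring
      nlinarith [Complex.normSq_nonneg z]
    rcases le_or_gt 1 (Complex.normSq (1 + z)) with h | h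
    · left
      have h1' : (1:ℝ) ≤ ‖1 + z‖ := by
        rw [← Complex.sq_norm] at h; nlinarith [norm_nonneg (1+z)]
      have : (1:ℝ) ≤ ‖A‖ := by
        rw [hA, Complex.norm_cpow_real]
        exact Real.one_le_rpow h1' hlam0.le
      rw [← Complex.sq_norm]; nlinarith
    · right
      have h2' : (1:ℝ) ≤ ‖1 - z‖ := by
        have : (1:ℝ) ≤ Complex.normSq (1 - z) := by nlinarith
        rw [← Complex.sq_norm] at this; nlinarith [norm_nonneg (1-z)]
      have : (1:ℝ) ≤ ‖B‖ := by
        rw [hB, Complex.norm_cpow_real]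
        exact Real.one_le_rpow h2' hlam0.le
      rw [← Complex.sq_norm]; nlinarith
  have hS1 : 1 ≤ Complex.normSq (A + B) := by
    rcases hmax with h | h <;> nlinarith [Complex.normSq_nonneg A, Complex.normSq_nonneg B]
  have hSabs : 1 ≤ ‖A + B‖ := by
    rw [← Complex.sq_norm] at hS1; nlinarith [norm_nonneg (A+B)]
  have hSne : A + B ≠ 0 := by
    intro h; rw [h] at hSabs; simp at hSabs; linarith
  -- key identity
  have hid : 1 - lensMap lam z ^ 2 = 4 * A * B / (A + B) ^ 2 := by
    rw [lensMap, ← hA, ← hB]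
    field_simp
    ring
  have hz2ne : (1:ℂ) - z ^ 2 ≠ 0 := by
    intro h
    have : z ^ 2 = 1 := by linear_combination -h
    have : ‖z ^ 2‖ = 1 := by rw [this]; simp
    rw [norm_pow] at this
    nlinarith [norm_nonneg z]
  have hz2pos : 0 < ‖1 - z ^ 2‖ := norm_pos_iff.mpr hz2ne
  -- norm of 1 - φ²
  have hfac : (1:ℂ) - z ^ 2 = (1 + z) * (1 - z) := by ring
  have hnorm1 : ‖1 - lensMap lam z ^ 2‖ ≤ 4 * ‖1 - z ^ 2‖ ^ lam := by
    rw [hid]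
    rw [norm_div, norm_mul, norm_mul, norm_pow]
    have habsAB : ‖A‖ * ‖B‖ = ‖1 - z ^ 2‖ ^ lam := by
      rw [hA, hB, Complex.norm_cpow_real, Complex.norm_cpow_real, hfac, norm_mul,
        ← Real.mul_rpow (norm_nonneg _) (norm_nonneg _)]
    have h4 : ‖(4:ℂ)‖ = 4 := by
      simp
    rw [h4, mul_assoc, habsAB]
    have hS2 : (1:ℝ) ≤ ‖A + B‖ ^ 2 := by nlinarith
    rw [div_le_iff₀ (by nlinarith : (0:ℝ) < ‖A + B‖ ^ 2)]
    nlinarith [Real.rpow_nonneg (norm_nonneg (1 - z^2)) lam]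
  -- conclude
  have half : ((1:ℂ)/2) = (((1:ℝ)/2 : ℝ) : ℂ) := by norm_num
  rw [half, Complex.norm_cpow_real]
  have hq : ‖(1 - lensMap lam z ^ 2) / (1 - z ^ 2)‖ ≤
      4 * ‖1 - z ^ 2‖ ^ (lam - 1) := by
    rw [norm_div, div_le_iff₀ hz2pos]
    calc ‖1 - lensMap lam z ^ 2‖ ≤ 4 * ‖1 - z ^ 2‖ ^ lam := hnorm1
      _ = 4 * ‖1 - z ^ 2‖ ^ (lam - 1) * ‖1 - z ^ 2‖ := by
          rw [mul_assoc, ← Real.rpow_add_one hz2pos.ne' (lam - 1)]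
          norm_num
  calc ‖(1 - lensMap lam z ^ 2) / (1 - z ^ 2)‖ ^ ((1:ℝ)/2)
      ≤ (4 * ‖1 - z ^ 2‖ ^ (lam - 1)) ^ ((1:ℝ)/2) := by
        apply Real.rpow_le_rpow (norm_nonneg _) hq (by norm_num)
    _ = 2 * ‖1 - z ^ 2‖ ^ ((lam - 1)/2) := by
        rw [Real.mul_rpow (by norm_num) (Real.rpow_nonneg (norm_nonneg _) _),
          ← Real.rpow_mul (norm_nonneg _)]
        have h42 : (4:ℝ) ^ ((1:ℝ)/2) = 2 := by
          rw [show (4:ℝ) = 2 ^ (2:ℕ) by norm_num, ← Real.rpow_natCast (2:ℝ) 2,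
            ← Real.rpow_mul (by norm_num : (0:ℝ) ≤ 2)]
          norm_num
        rw [h42, mul_one_div]
  -- done
end
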